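/- arXiv:1203.5548 — 6 statements merged into one kernel-verified Lean document; each statement's English description precedes it below -/
import Mathlib

section
/- Let f = Σ_α a_α X_α be an n-symbol, let (b_α) be the associated weight family, and let W_1^f, …, W_n^f be the associated weighted shifts on ℓ²(𝔽₊ⁿ). Then the tuple (W_1^f, …, W_n^f) belongs to the noncommutative domain D_f(F(ℂⁿ)); that is, Σ_α a_α W_α^f (W_α^f)* ≤ 1 in the Löwner order on bounded operators on ℓ²(𝔽₊ⁿ). -/
/-- Words over the alphabet `{1,…,n}`: the free monoid `𝔽₊ⁿ` (empty word `[]`,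
concatenation `++`, word length `List.length`). -/
abbrev Word (n : ℕ) := List (Fin n)

/-- An `n`-symbol: a finitely supported family of real coefficients indexed by words,
vanishing at the empty word, nonnegative everywhere, and strictly positive at
single-letter words. -/
structure NSymbol (n : ℕ) where
  a : Word n → ℝ
  finiteSupport : (Function.support a).Finite
  map_empty : a [] = 0
  nonneg : ∀ α : Word n, 0 ≤ a α
  pos_single : ∀ j : Fin n, 0 < a [j]

/-- The weight family `(b_α)` of an `n`-symbol: `b_∅ = 1` and, for a nonempty word `α`,
`b_α = Σ_{k=1}^{|α|} Σ_{α = γ₁⋯γ_k, γᵢ ≠ ∅} a_{γ₁}⋯a_{γ_k}`, i.e. the sum of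
`a_{γ₁}⋯a_{γ_k}` over all factorizations of `α` into at least one nonempty word. -/
noncomputable def weight {n : ℕ} (f : NSymbol n) (α : Word n) : ℝ :=
  if α = [] then 1
  else ∑ᶠ L ∈ {L : List (Word n) |
      L.flatten = α ∧ 1 ≤ L.length ∧ ∀ γ ∈ L, γ ≠ ([] : Word n)},
    (L.map f.a).prod

/-- The full Fock space `F(ℂⁿ)`, identified with `ℓ²(𝔽₊ⁿ)`. -/
noncomputable abbrev Fock (n : ℕ) := lp (fun _ : Word n => ℂ) 2

/-- The canonical orthonormal basis vector `e_α` of `ℓ²(𝔽₊ⁿ)`. -/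
noncomputable def e {n : ℕ} (α : Word n) : Fock n := lp.single 2 α 1

/-- `T_α = T_{i₁}⋯T_{i_k}` for a word `α = i₁⋯i_k`, with `T_∅ = 1`. -/
noncomputable def opWord {n : ℕ} {H : Type*} [NormedAddCommGroup H] [NormedSpace ℂ H]
    (T : Fin n → H →L[ℂ] H) (α : Word n) : H →L[ℂ] H :=
  (α.map T).prod

/-- Membership in the noncommutative domain `D_f(H)`:
`Σ_α a_α T_α T_α* ≤ 1_H` in the Löwner order on `B(H)`. -/
def memDomain {n : ℕ} (f : NSymbol n) {H : Type*} [NormedAddCommGroup H]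
    [InnerProductSpace ℂ H] [CompleteSpace H] (T : Fin n → H →L[ℂ] H) : Prop :=
  (∑ᶠ α : Word n, f.a α • (opWord T α * ContinuousLinearMap.adjoint (opWord T α))) ≤ 1

namespace Stmt0Aux
variable {n : ℕ}

open scoped ComplexConjugate
local notation "⟪" x ", " y "⟫" => @inner ℂ _ _ x y

/-- The finset of factorizations of `γ` into nonempty words. -/
def fsets (γ : Word n) : Finset (List (Word n)) :=
  if h : γ = [] then {[]}
  else (Finset.Icc 1 γ.length).attach.biUnion fun k =>
      (fsets (γ.drop k.1)).image (γ.take k.1 :: ·)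
termination_by γ.length
decreasing_by
  have h1 := (Finset.mem_Icc.mp k.2).1
  have h2 : 0 < γ.length := List.length_pos_iff.mpr h
  simp only [List.length_drop]
  omega

theorem mem_fsets : ∀ (γ : Word n) (L : List (Word n)),
    L ∈ fsets γ ↔ (L.flatten = γ ∧ ∀ p ∈ L, p ≠ []) := by
  intro γ
  induction γ using fsets.induct with
  | case1 =>
    intro L
    have hnil : fsets ([] : Word n) = {[]} := by rw [fsets]; simp
    simp only [hnil, Finset.mem_singleton]
    constructor
    · rintro rfl; simp
    · rintro ⟨h1, h2⟩
      cases L with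
      | nil => rfl
      | cons p M =>
        exfalso
        simp only [List.flatten_cons] at h1
        exact h2 p (by simp) (List.append_eq_nil_iff.mp h1).1
  | case2 γ h ih =>
    intro L
    constructor
    · intro hL
      rw [fsets, dif_neg h] at hL
      simp only [Finset.mem_biUnion, Finset.mem_attach, Finset.mem_image, true_and] at hL
      obtain ⟨⟨k, hk⟩, M, hM, rfl⟩ := hL
      obtain ⟨hk1, hk2⟩ := Finset.mem_Icc.mp hk
      rw [ih ⟨k, hk⟩] at hM
      obtain ⟨hflat, hparts⟩ := hM
      refine ⟨by simp [hflat, List.take_append_drop], ?_⟩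
      intro p hp
      rcases List.mem_cons.mp hp with rfl | hp'
      · intro hcon
        have : (γ.take k).length = 0 := by rw [hcon]; rfl
        rw [List.length_take] at this
        have h2 : 0 < γ.length := List.length_pos_iff.mpr h
        omega
      · exact hparts p hp'
    · rintro ⟨hflat, hparts⟩
      cases L with
      | nil => exact absurd hflat.symm (by simpa using h)
      | cons δ M =>
        have hδ : δ ≠ [] := hparts δ (by simp)
        have hδlen : 1 ≤ δ.length := List.length_pos_iff.mpr hδ
        simp only [List.flatten_cons] at hflat
        have hkle : δ.length ≤ γ.length := by
          rw [← hflat, List.length_append]; omega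
        have htake : γ.take δ.length = δ := by
          rw [← hflat]; exact List.take_left
        have hdrop : γ.drop δ.length = M.flatten := by
          rw [← hflat]; exact List.drop_left
        rw [fsets, dif_neg h]
        simp only [Finset.mem_biUnion, Finset.mem_attach, Finset.mem_image, true_and]
        refine ⟨⟨δ.length, Finset.mem_Icc.mpr ⟨hδlen, hkle⟩⟩, M, ?_, by rw [htake]⟩
        rw [ih ⟨δ.length, Finset.mem_Icc.mpr ⟨hδlen, hkle⟩⟩]
        exact ⟨hdrop.symm, fun p hp => hparts p (by simp [hp])⟩

theorem weight_eq_sum (f : NSymbol n) (γ : Word n) :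
    weight f γ = ∑ L ∈ fsets γ, (L.map f.a).prod := by
  by_cases h : γ = []
  · subst h
    have hnil : fsets ([] : Word n) = {[]} := by rw [fsets]; simp
    simp [weight, hnil]
  · rw [weight, if_neg h]
    have hset : {L : List (Word n) |
        L.flatten = γ ∧ 1 ≤ L.length ∧ ∀ p ∈ L, p ≠ ([] : Word n)} = ↑(fsets γ) := by
      ext L
      rw [Finset.mem_coe, mem_fsets]
      constructor
      · rintro ⟨h1, _, h3⟩; exact ⟨h1, h3⟩
      · rintro ⟨h1, h3⟩
        refine ⟨h1, ?_, h3⟩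
        rcases L with _ | ⟨p, M⟩
        · exact absurd h1.symm (by simpa using h)
        · simp
    rw [hset, finsum_mem_coe_finset]

theorem weight_rec (f : NSymbol n) {γ : Word n} (h : γ ≠ []) :
    weight f γ = ∑ k ∈ Finset.Icc 1 γ.length,
      f.a (γ.take k) * weight f (γ.drop k) := by
  rw [weight_eq_sum, fsets, dif_neg h]
  rw [Finset.sum_biUnion]
  · rw [← Finset.sum_attach (Finset.Icc 1 γ.length)
      (fun k => f.a (γ.take k) * weight f (γ.drop k))]
    refine Finset.sum_congr rfl fun k _ => ?_
    rw [Finset.sum_image (by intro x _ y _ hxy; simpa using hxy)]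
    rw [weight_eq_sum, Finset.mul_sum]
    refine Finset.sum_congr rfl fun M _ => ?_
    simp [mul_comm]
  · -- pairwise disjoint
    intro k _ k' _ hne
    simp only [Function.onFun]
    rw [Finset.disjoint_left]
    rintro L hL hL'
    simp only [Finset.mem_image] at hL hL'
    obtain ⟨M, hM, rfl⟩ := hL
    obtain ⟨M', hM', hEq⟩ := hL'
    have hhead : γ.take k'.1 = γ.take k.1 := (List.cons.injEq _ _ _ _ ▸ hEq).1
    have h1 := (Finset.mem_Icc.mp k.2)
    have h2 := (Finset.mem_Icc.mp k'.2)
    have := congrArg List.length hhead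
    rw [List.length_take, List.length_take] at this
    exact hne (Subtype.ext (by omega)).symm

theorem weight_pos (f : NSymbol n) : ∀ γ : Word n, 0 < weight f γ := by
  intro γ
  induction γ using fsets.induct with
  | case1 => simp [weight]
  | case2 γ h ih =>
    rw [weight_rec f h]
    have h0 : 0 < γ.length := List.length_pos_iff.mpr h
    refine Finset.sum_pos' ?_ ⟨1, Finset.mem_Icc.mpr ⟨le_refl 1, h0⟩, ?_⟩
    · intro k hk
      have := ih ⟨k, hk⟩
      exact mul_nonneg (f.nonneg _) (le_of_lt this)
    · have h1 : (1 : ℕ) ∈ Finset.Icc 1 γ.length := Finset.mem_Icc.mpr ⟨le_refl 1, h0⟩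
      have := ih ⟨1, h1⟩
      refine mul_pos ?_ this
      rcases γ with _ | ⟨x, t⟩
      · exact absurd rfl h
      · simpa using f.pos_single x

theorem weight_nonneg (f : NSymbol n) (γ : Word n) : 0 ≤ weight f γ :=
  le_of_lt (weight_pos f γ)

theorem weight_ne_zero (f : NSymbol n) (γ : Word n) : weight f γ ≠ 0 :=
  ne_of_gt (weight_pos f γ)

theorem key_sum (f : NSymbol n) {γ : Word n} (h : γ ≠ []) :
    ∑ α ∈ f.finiteSupport.toFinset,
      (if α <+: γ then f.a α * weight f (γ.drop α.length) else 0) = weight f γ := by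
  classical
  rw [Finset.sum_ite, Finset.sum_const_zero, add_zero, weight_rec f h]
  rw [← Finset.sum_subset (Finset.filter_subset (fun k => γ.take k ∈ f.finiteSupport.toFinset)
      (Finset.Icc 1 γ.length)) (by
        intro k hk hk'
        simp only [Finset.mem_filter, hk, true_and] at hk'
        have : f.a (γ.take k) = 0 := by
          by_contra hc
          exact hk' (f.finiteSupport.mem_toFinset.mpr hc)
        rw [this, zero_mul])]
  refine Finset.sum_nbij' (fun α => α.length) (fun k => γ.take k) ?_ ?_ ?_ ?_ ?_
  · intro α hα
    simp only [Finset.mem_filter] at hα ⊢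
    obtain ⟨hF, hpre⟩ := hα
    have ha : f.a α ≠ 0 := f.finiteSupport.mem_toFinset.mp hF
    have hne : α ≠ [] := fun hc => ha (hc ▸ f.map_empty)
    have htake : γ.take α.length = α := (List.prefix_iff_eq_take.mp hpre).symm
    refine ⟨Finset.mem_Icc.mpr ⟨List.length_pos_iff.mpr hne, hpre.length_le⟩, ?_⟩
    rw [htake]; exact hF
  · intro k hk
    simp only [Finset.mem_filter] at hk ⊢
    exact ⟨hk.2, List.take_prefix k γ⟩
  · intro α hα
    simp only [Finset.mem_filter] at hα
    exact (List.prefix_iff_eq_take.mp hα.2).symm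
  · intro k hk
    simp only [Finset.mem_filter, Finset.mem_Icc] at hk
    show (List.take k γ).length = k
    rw [List.length_take]
    omega
  · intro α hα
    simp only [Finset.mem_filter] at hα
    have htake : γ.take α.length = α := (List.prefix_iff_eq_take.mp hα.2).symm
    show _ = f.a (γ.take α.length) * weight f (γ.drop α.length)
    rw [htake]


theorem real_smul_eq (r : ℝ) (v : Fock n) : r • v = (r : ℂ) • v := by
  rw [← smul_one_smul ℂ r v, Complex.real_smul, mul_one]

theorem e_coord (α β : Word n) : (e α : ∀ _ : Word n, ℂ) β = if β = α then 1 else 0 := by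
  rw [e, lp.single_apply]
  by_cases h : β = α <;> simp [h]

theorem inner_e_left (β : Word n) (x : Fock n) : ⟪e β, x⟫ = x β := by
  rw [e, lp.inner_single_left]
  simp

theorem smul_e_coord (c : ℂ) (δ β : Word n) :
    ((c • e δ : Fock n) : ∀ _ : Word n, ℂ) β = if β = δ then c else 0 := by
  rw [lp.coeFn_smul, Pi.smul_apply, e_coord]
  split <;> simp

theorem opWord_nil {H : Type*} [NormedAddCommGroup H] [NormedSpace ℂ H]
    (T : Fin n → H →L[ℂ] H) : opWord T [] = 1 := rfl

theorem opWord_cons {H : Type*} [NormedAddCommGroup H] [NormedSpace ℂ H]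
    (T : Fin n → H →L[ℂ] H) (j : Fin n) (α : Word n) :
    opWord T (j :: α) = T j * opWord T α := by
  simp [opWord]

/-- rank-one projection onto `e []`. -/
noncomputable def P : Fock n →L[ℂ] Fock n :=
  (innerSL ℂ (e ([] : Word n))).smulRight (e ([] : Word n))

theorem P_apply (x : Fock n) : P x = ⟪e ([] : Word n), x⟫ • e ([] : Word n) := rfl

theorem P_apply_e (γ : Word n) : P (e γ) = if γ = [] then e ([] : Word n) else 0 := by
  rw [P_apply, inner_e_left, e_coord]
  by_cases h : γ = []
  · subst h; simp
  · rw [if_neg (fun hc => h hc.symm), if_neg h, zero_smul]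

theorem P_isPositive : (P : Fock n →L[ℂ] Fock n).IsPositive := by
  constructor
  · intro x y
    simp only [ContinuousLinearMap.coe_coe, P_apply, inner_smul_left, inner_smul_right]
    rw [← inner_conj_symm x (e ([] : Word n))]
    ring
  · intro x
    rw [ContinuousLinearMap.reApplyInnerSelf_apply, P_apply, inner_smul_left,
      RCLike.conj_mul]
    rw [← RCLike.ofReal_pow, RCLike.ofReal_re]
    positivity

section W
variable (f : NSymbol n) (W : Fin n → Fock n →L[ℂ] Fock n)
  (hW : ∀ (j : Fin n) (α : Word n),
    W j (e α) = Real.sqrt (weight f α / weight f (j :: α)) • e (j :: α))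

include hW

theorem opWord_apply_e (α β : Word n) :
    opWord W α (e β) =
      (Real.sqrt (weight f β / weight f (α ++ β)) : ℂ) • e (α ++ β) := by
  induction α with
  | nil =>
    rw [opWord_nil]
    simp [div_self (weight_ne_zero f β)]
  | cons j α ih =>
    rw [opWord_cons, ContinuousLinearMap.mul_apply, ih, map_smul, hW j (α ++ β)]
    rw [real_smul_eq, smul_smul, ← Complex.ofReal_mul]
    rw [← Real.sqrt_mul (le_of_lt (div_pos (weight_pos f β) (weight_pos f (α ++ β))))]
    have harg : weight f β / weight f (α ++ β) *
        (weight f (α ++ β) / weight f (j :: (α ++ β)))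
        = weight f β / weight f (j :: (α ++ β)) := by
      rw [div_mul_div_comm, mul_comm (weight f β),
        mul_div_mul_left _ _ (weight_ne_zero f (α ++ β))]
    rw [harg]
    rfl

theorem adjoint_opWord_apply_e (α γ : Word n) :
    ContinuousLinearMap.adjoint (opWord W α) (e γ) =
      if α <+: γ then
        (Real.sqrt (weight f (γ.drop α.length) / weight f γ) : ℂ) • e (γ.drop α.length)
      else 0 := by
  classical
  apply lp.ext
  funext β
  have lhs : (ContinuousLinearMap.adjoint (opWord W α) (e γ) : ∀ _ : Word n, ℂ) β
      = (Real.sqrt (weight f β / weight f (α ++ β)) : ℂ) * (if α ++ β = γ then 1 else 0) := by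
    rw [← inner_e_left, ContinuousLinearMap.adjoint_inner_right, opWord_apply_e f W hW,
      inner_smul_left, inner_e_left, e_coord]
    simp
  rw [lhs]
  by_cases hpre : α <+: γ
  · rw [if_pos hpre, smul_e_coord]
    have hγ : α ++ γ.drop α.length = γ := by
      obtain ⟨t, rfl⟩ := hpre
      rw [List.drop_left]
    by_cases hβ : β = γ.drop α.length
    · rw [if_pos hβ]
      subst hβ
      rw [if_pos hγ, mul_one, hγ]
    · have hne : α ++ β ≠ γ := by
        intro hc
        apply hβ
        have := congrArg (List.drop α.length) hc
        rwa [List.drop_left] at this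
      rw [if_neg hne, mul_zero, if_neg hβ]
  · rw [if_neg hpre]
    have hne : α ++ β ≠ γ := fun hc => hpre ⟨β, hc⟩
    rw [if_neg hne, mul_zero]
    simp

theorem term_apply_e (α γ : Word n) :
    opWord W α (ContinuousLinearMap.adjoint (opWord W α) (e γ)) =
      if α <+: γ then
        ((weight f (γ.drop α.length) / weight f γ : ℝ) : ℂ) • e γ
      else 0 := by
  rw [adjoint_opWord_apply_e f W hW]
  by_cases hpre : α <+: γ
  · rw [if_pos hpre, if_pos hpre, map_smul, opWord_apply_e f W hW]
    have hγ : α ++ γ.drop α.length = γ := by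
      obtain ⟨t, rfl⟩ := hpre
      rw [List.drop_left]
    rw [hγ, smul_smul, ← Complex.ofReal_mul,
      Real.mul_self_sqrt (div_nonneg (weight_nonneg f _) (weight_nonneg f _))]
  · rw [if_neg hpre, if_neg hpre, map_zero]

/-- The sum `S` as a finite sum. -/
noncomputable def S : Fock n →L[ℂ] Fock n :=
  ∑ α ∈ f.finiteSupport.toFinset,
    f.a α • (opWord W α * ContinuousLinearMap.adjoint (opWord W α))

omit hW in
theorem finsum_eq_S :
    (∑ᶠ α : Word n, f.a α • (opWord W α * ContinuousLinearMap.adjoint (opWord W α)))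
      = S f W := by
  apply finsum_eq_sum_of_support_subset
  intro α hα
  rw [Function.mem_support] at hα
  rw [Set.Finite.coe_toFinset, Function.mem_support]
  intro hc
  exact hα (by rw [hc, zero_smul])


theorem S_apply_e (γ : Word n) : S f W (e γ) = if γ = [] then 0 else e γ := by
  classical
  rw [S, ContinuousLinearMap.sum_apply]
  have hterm : ∀ α ∈ f.finiteSupport.toFinset,
      (f.a α • (opWord W α * ContinuousLinearMap.adjoint (opWord W α))) (e γ)
      = (((if α <+: γ then f.a α * (weight f (γ.drop α.length) / weight f γ) else 0 : ℝ)) : ℂ)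
          • e γ := by
    intro α _
    rw [ContinuousLinearMap.smul_apply, ContinuousLinearMap.mul_apply, term_apply_e f W hW]
    by_cases hpre : α <+: γ
    · rw [if_pos hpre, if_pos hpre, real_smul_eq, smul_smul, ← Complex.ofReal_mul]
    · rw [if_neg hpre, if_neg hpre, smul_zero, Complex.ofReal_zero, zero_smul]
  rw [Finset.sum_congr rfl hterm, ← Finset.sum_smul, ← Complex.ofReal_sum]
  by_cases h : γ = []
  · subst h
    rw [if_pos rfl]
    have : ∀ α ∈ f.finiteSupport.toFinset,
        (if α <+: ([] : Word n) then f.a α * (weight f (List.drop α.length []) / weight f []) else 0) = 0 := by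
      intro α hα
      rw [if_neg]
      intro hc
      have : α = [] := List.prefix_nil.mp hc
      subst this
      exact (f.finiteSupport.mem_toFinset.mp hα) f.map_empty
    rw [Finset.sum_congr rfl this, Finset.sum_const_zero, Complex.ofReal_zero, zero_smul]
  · rw [if_neg h]
    have : ∀ α ∈ f.finiteSupport.toFinset,
        (if α <+: γ then f.a α * (weight f (γ.drop α.length) / weight f γ) else 0)
        = (if α <+: γ then f.a α * weight f (γ.drop α.length) else 0) / weight f γ := by
      intro α _
      split
      · rw [mul_div_assoc]
      · rw [zero_div]
    rw [Finset.sum_congr rfl this, ← Finset.sum_div, key_sum f h,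
      div_self (weight_ne_zero f γ), Complex.ofReal_one, one_smul]

theorem S_add_P (x : Fock n) : S f W x + P x = x := by
  have hx : HasSum (fun γ : Word n => (x γ) • e γ) x := by
    have h := lp.hasSum_single (E := fun _ : Word n => ℂ) ENNReal.ofNat_ne_top x
    refine h.congr_fun fun γ => ?_
    rw [e, ← lp.single_smul, smul_eq_mul, mul_one]
  have h1 := (S f W).hasSum hx
  have h2 := (P (n := n)).hasSum hx
  have h3 := h1.add h2
  have hSP : ∀ γ : Word n, S f W ((x γ) • e γ) + P ((x γ) • e γ) = (x γ) • e γ := by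
    intro γ
    rw [map_smul, map_smul, S_apply_e f W hW, P_apply_e]
    by_cases h : γ = []
    · subst h; simp
    · rw [if_neg h, if_neg h, smul_zero, add_zero]
  have h4 : HasSum (fun γ : Word n => (x γ) • e γ) (S f W x + P x) :=
    h3.congr_fun (fun γ => (hSP γ).symm)
  exact h4.unique hx

end W

end Stmt0Aux

/-- the weighted shifts `(W_1^f,…,W_n^f)` associated to an `n`-symbol `f`
belong to the noncommutative domain `D_f(F(ℂⁿ))`:
`Σ_α a_α W_α^f (W_α^f)* ≤ 1` in the Löwner order on `B(ℓ²(𝔽₊ⁿ))`. -/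
theorem stmt0 {n : ℕ} (hn : 1 ≤ n) (f : NSymbol n)
    (W : Fin n → Fock n →L[ℂ] Fock n)
    (hW : ∀ (j : Fin n) (α : Word n),
      W j (e α) = Real.sqrt (weight f α / weight f (j :: α)) • e (j :: α)) :
    memDomain f W := by
  rw [memDomain]
  erw [Stmt0Aux.finsum_eq_S f W]
  rw [ContinuousLinearMap.le_def]
  have h1 : (1 : Fock n →L[ℂ] Fock n) - Stmt0Aux.S f W = Stmt0Aux.P := by
    apply ContinuousLinearMap.ext
    intro x
    rw [ContinuousLinearMap.sub_apply, ContinuousLinearMap.one_apply]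
    exact (eq_sub_of_add_eq' (Stmt0Aux.S_add_P f W hW x)).symm
  rw [h1]
  exact Stmt0Aux.P_isPositive
end

section
/- Let f = Σ_α a_α X_α be an n-symbol with associated weights (b_α) and weighted shifts W_j^f on ℓ²(𝔽₊ⁿ). Then Σ_{α : |α| ≥ 1} a_α W_α^f (W_α^f)* = 1 − P_∅, where P_∅ is the orthogonal projection of ℓ²(𝔽₊ⁿ) onto the span of the basis vector e_∅ and the sum runs over the (finitely many) words α with a_α ≠ 0. -/
section Comb
variable {n : ℕ}

def FactSet (β : Word n) : Set (List (Word n)) :=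
  {L | L.flatten = β ∧ ∀ γ ∈ L, γ ≠ ([] : Word n)}

lemma length_le_flatten_length {L : List (Word n)} (h : ∀ γ ∈ L, γ ≠ ([] : Word n)) :
    L.length ≤ L.flatten.length := by
  induction L with
  | nil => simp
  | cons γ M ih =>
    have h1 : 1 ≤ γ.length := List.length_pos_iff.mpr (h γ (by simp))
    have h2 : M.length ≤ M.flatten.length := ih fun δ hδ => h δ (by simp [hδ])
    simp only [List.flatten_cons, List.length_cons, List.length_append]
    omega

lemma mem_length_le_flatten {L : List (Word n)} {γ : Word n} (hγ : γ ∈ L) :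
    γ.length ≤ L.flatten.length := by
  induction L with
  | nil => simp at hγ
  | cons δ M ih =>
    simp only [List.flatten_cons, List.length_append]
    rcases List.mem_cons.mp hγ with rfl | h
    · omega
    · have := ih h; omega

lemma factSet_finite (β : Word n) : (FactSet β).Finite := by
  classical
  set m := β.length
  have hS : Finite {γ : Word n // γ.length ≤ m} := by
    have : {γ : Word n | γ.length ≤ m}.Finite := List.finite_length_le _ _
    exact this.to_subtype
  have hL : {l : List {γ : Word n // γ.length ≤ m} | l.length ≤ m}.Finite :=
    List.finite_length_le _ _
  refine (hL.image (List.map (Subtype.val : {γ : Word n // γ.length ≤ m} → Word n))).subset ?_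
  rintro L ⟨hflat, hne⟩
  have hlen : ∀ γ ∈ L, γ.length ≤ m := by
    intro γ hγ
    have := mem_length_le_flatten hγ
    rw [hflat] at this
    exact this
  refine ⟨L.attach.map (fun x => (⟨x.1, hlen x.1 x.2⟩ : {γ : Word n // γ.length ≤ m})), ?_, ?_⟩
  · have : L.length ≤ L.flatten.length := length_le_flatten_length hne
    simpa using by rw [hflat] at this; simpa using this
  · rw [List.map_map]
    exact List.attach_map_subtype_val L

noncomputable def factFinset (β : Word n) : Finset (List (Word n)) :=
  (factSet_finite β).toFinset

lemma mem_factFinset {β : Word n} {L : List (Word n)} :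
    L ∈ factFinset β ↔ L.flatten = β ∧ ∀ γ ∈ L, γ ≠ ([] : Word n) := by
  simp [factFinset, FactSet]

noncomputable def B (f : NSymbol n) (β : Word n) : ℝ :=
  ∑ L ∈ factFinset β, (L.map f.a).prod

lemma weight_eq_B (f : NSymbol n) (β : Word n) : weight f β = B f β := by
  classical
  rcases eq_or_ne β [] with rfl | hβ
  · have : factFinset ([] : Word n) = {([] : List (Word n))} := by
      ext L
      simp only [mem_factFinset, Finset.mem_singleton]
      constructor
      · rintro ⟨hflat, hne⟩
        rcases L with _ | ⟨γ, M⟩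
        · rfl
        · exfalso
          have : γ = [] := by
            have := List.flatten_eq_nil_iff.mp hflat
            exact this γ (by simp)
          exact hne γ (by simp) this
      · rintro rfl; simp
    simp [weight, B, this]
  · have hset : {L : List (Word n) |
        L.flatten = β ∧ 1 ≤ L.length ∧ ∀ γ ∈ L, γ ≠ ([] : Word n)} = FactSet β := by
      ext L
      simp only [Set.mem_setOf_eq, FactSet]
      constructor
      · rintro ⟨h1, _, h3⟩; exact ⟨h1, h3⟩
      · rintro ⟨h1, h3⟩
        refine ⟨h1, ?_, h3⟩
        rcases L with _ | _
        · simp at h1; exact (hβ h1).elim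
        · simp
    rw [weight, if_neg hβ, hset, B,
      finsum_mem_eq_finite_toFinset_sum _ (factSet_finite β)]
    rfl

lemma ne_nil_of_factor {β : Word n} (hβ : β ≠ []) {L : List (Word n)}
    (hflat : L.flatten = β) : L ≠ [] := by
  intro h
  rw [h] at hflat
  exact hβ (by simpa using hflat.symm)

lemma B_rec (f : NSymbol n) (β : Word n) (hβ : β ≠ []) :
    B f β = ∑ k ∈ Finset.Icc 1 β.length, f.a (β.take k) * B f (β.drop k) := by
  classical
  simp only [B, Finset.mul_sum]
  rw [Finset.sum_sigma']
  refine Finset.sum_bij' (fun L _ => (⟨L.headI.length, L.tail⟩ : Σ _ : ℕ, List (Word n)))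
    (fun p _ => β.take p.1 :: p.2) ?_ ?_ ?_ ?_ ?_
  · -- maps into sigma finset
    intro L hL
    rw [mem_factFinset] at hL
    obtain ⟨hflat, hne⟩ := hL
    obtain ⟨γ, M, rfl⟩ := List.exists_cons_of_ne_nil (ne_nil_of_factor hβ hflat)
    simp only [List.headI, List.tail_cons]
    have hγβ : γ ++ M.flatten = β := by simpa using hflat
    refine Finset.mem_sigma.mpr ⟨?_, ?_⟩
    · refine Finset.mem_Icc.mpr ⟨List.length_pos_iff.mpr (hne γ (by simp)), ?_⟩
      rw [← hγβ]; simp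
    · rw [mem_factFinset]
      refine ⟨?_, fun δ hδ => hne δ (by simp [hδ])⟩
      rw [← hγβ, List.drop_left]
  · -- j maps into factFinset β
    rintro ⟨k, M⟩ hp
    obtain ⟨hk, hM⟩ := Finset.mem_sigma.mp hp
    dsimp only at hk hM ⊢
    obtain ⟨hk1, hk2⟩ := Finset.mem_Icc.mp hk
    rw [mem_factFinset] at hM ⊢
    constructor
    · simp only [List.flatten_cons, hM.1, List.take_append_drop]
    · intro γ hγ
      rcases List.mem_cons.mp hγ with rfl | h
      · intro habs
        have h0 : (List.take k β).length = 0 := by rw [habs]; rfl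
        rw [List.length_take] at h0
        have hβ0 : 0 < β.length := List.length_pos_iff.mpr hβ
        omega
      · exact hM.2 γ h
  · -- left inverse
    intro L hL
    rw [mem_factFinset] at hL
    obtain ⟨hflat, hne⟩ := hL
    obtain ⟨γ, M, rfl⟩ := List.exists_cons_of_ne_nil (ne_nil_of_factor hβ hflat)
    simp only [List.headI, List.tail_cons]
    have hγβ : γ ++ M.flatten = β := by simpa using hflat
    rw [← hγβ, List.take_left]
  · -- right inverse
    rintro ⟨k, M⟩ hp
    obtain ⟨hk, _⟩ := Finset.mem_sigma.mp hp
    dsimp only at hk ⊢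
    obtain ⟨_, hk2⟩ := Finset.mem_Icc.mp hk
    simp only [List.headI, List.tail_cons]
    congr 1
    rw [List.length_take]
    omega
  · -- values
    intro L hL
    rw [mem_factFinset] at hL
    obtain ⟨hflat, hne⟩ := hL
    obtain ⟨γ, M, rfl⟩ := List.exists_cons_of_ne_nil (ne_nil_of_factor hβ hflat)
    have hγβ : γ ++ M.flatten = β := by simpa using hflat
    simp only [List.headI, List.tail_cons, List.map_cons, List.prod_cons]
    rw [← hγβ, List.take_left]

lemma B_nonneg (f : NSymbol n) (β : Word n) : 0 ≤ B f β := by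
  refine Finset.sum_nonneg fun L _ => List.prod_nonneg ?_
  intro x hx
  obtain ⟨γ, _, rfl⟩ := List.mem_map.mp hx
  exact f.nonneg γ

lemma weight_nonneg (f : NSymbol n) (β : Word n) : 0 ≤ weight f β := by
  rw [weight_eq_B]; exact B_nonneg f β

lemma weight_rec (f : NSymbol n) (β : Word n) (hβ : β ≠ []) :
    weight f β = ∑ k ∈ Finset.Icc 1 β.length, f.a (β.take k) * weight f (β.drop k) := by
  rw [weight_eq_B, B_rec f β hβ]
  exact Finset.sum_congr rfl fun k _ => by rw [weight_eq_B]

lemma weight_pos (f : NSymbol n) (β : Word n) : 0 < weight f β := by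
  suffices h : ∀ (k : ℕ) (β : Word n), β.length = k → 0 < weight f β from h β.length β rfl
  intro k
  induction k using Nat.strong_induction_on with
  | _ k ih =>
    intro β hk
    match β with
    | [] => simp [weight]
    | j :: t =>
      rw [weight_rec f _ (by simp)]
      refine Finset.sum_pos' (fun i _ => mul_nonneg (f.nonneg _) (weight_nonneg f _)) ?_
      refine ⟨1, Finset.mem_Icc.mpr ⟨le_refl 1, by simp⟩, ?_⟩
      have h1 : (j :: t).take 1 = [j] := rfl
      have h2 : (j :: t).drop 1 = t := rfl
      rw [h1, h2]
      exact mul_pos (f.pos_single j) (ih t.length (by rw [← hk]; simp) t rfl)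

end Comb

section Analysis
variable {n : ℕ}

lemma e_apply (α γ : Word n) : (e α : ∀ _ : Word n, ℂ) γ = if γ = α then 1 else 0 := by
  classical
  rw [e, lp.single_apply]
  split_ifs with h
  · subst h; simp
  · simp [h]

lemma inner_e_left (α : Word n) (x : Fock n) : (inner ℂ (e α) x : ℂ) = x α := by
  classical
  rw [e, lp.inner_single_left]
  simp [RCLike.inner_apply]

lemma norm_e (α : Word n) : ‖e α‖ = 1 := by
  have := lp.norm_single (p := (2 : ENNReal)) (E := fun _ : Word n => ℂ) (by norm_num) α (1 : ℂ)
  simpa [e] using this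

lemma clm_ext_e {T S : Fock n →L[ℂ] Fock n} (h : ∀ α, T (e α) = S (e α)) : T = S := by
  classical
  refine ContinuousLinearMap.ext fun x => ?_
  have hx : HasSum (fun α : Word n => lp.single 2 α (x α)) x :=
    lp.hasSum_single ENNReal.ofNat_ne_top x
  have hsingle : ∀ α : Word n, lp.single 2 α (x α) = x α • e α := by
    intro α
    rw [e, ← lp.single_smul]
    congr 1
    simp
  have h1 := hx.mapL T
  have h2 := hx.mapL S
  refine h1.unique ?_
  have heq : (fun α : Word n => T (lp.single 2 α (x α)))
      = fun α : Word n => S (lp.single 2 α (x α)) := by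
    funext α
    rw [hsingle, map_smul, map_smul, h]
  rw [heq]
  exact h2

end Analysis

section Main
variable {n : ℕ} (f : NSymbol n) (W : Fin n → Fock n →L[ℂ] Fock n)

lemma opWord_apply_e
    (hW : ∀ (j : Fin n) (α : Word n),
      W j (e α) = Real.sqrt (weight f α / weight f (j :: α)) • e (j :: α))
    (α β : Word n) :
    opWord W α (e β) = Real.sqrt (weight f β / weight f (α ++ β)) • e (α ++ β) := by
  induction α with
  | nil =>
    simp [opWord, div_self (weight_pos f β).ne', Real.sqrt_one]
  | cons j α ih =>
    have hmul : opWord W (j :: α) = W j * opWord W α := by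
      simp [opWord, List.map_cons, List.prod_cons]
    rw [hmul, ContinuousLinearMap.mul_apply, ih, ContinuousLinearMap.map_smul_of_tower,
      hW, smul_smul]
    have hαβ : (j :: α) ++ β = j :: (α ++ β) := rfl
    rw [hαβ]
    congr 1
    rw [← Real.sqrt_mul (div_nonneg (weight_nonneg f β) (weight_nonneg f (α ++ β)))]
    congr 1
    have h1 : weight f (α ++ β) ≠ 0 := (weight_pos f _).ne'
    have h2 : weight f (j :: (α ++ β)) ≠ 0 := (weight_pos f _).ne'
    field_simp

lemma opWord_adjoint_apply_prefix
    (hW : ∀ (j : Fin n) (α : Word n),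
      W j (e α) = Real.sqrt (weight f α / weight f (j :: α)) • e (j :: α))
    (α γ : Word n) :
    ContinuousLinearMap.adjoint (opWord W α) (e (α ++ γ))
      = Real.sqrt (weight f γ / weight f (α ++ γ)) • e γ := by
  classical
  refine lp.ext (funext fun δ => ?_)
  have key : (ContinuousLinearMap.adjoint (opWord W α) (e (α ++ γ))) δ
      = (Real.sqrt (weight f γ / weight f (α ++ γ)) • e γ) δ := by
    rw [← inner_e_left δ (ContinuousLinearMap.adjoint (opWord W α) (e (α ++ γ))),
      ContinuousLinearMap.adjoint_inner_right,
      opWord_apply_e f W hW α δ,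
      RCLike.real_smul_eq_coe_smul (K := ℂ), inner_smul_left, RCLike.conj_ofReal,
      inner_e_left, e_apply, lp.coeFn_smul, Pi.smul_apply, e_apply]
    by_cases h : δ = γ
    · subst h; simp
    · rw [if_neg (by simpa using h), if_neg h]
      simp
  exact key

lemma opWord_adjoint_apply_nonprefix
    (hW : ∀ (j : Fin n) (α : Word n),
      W j (e α) = Real.sqrt (weight f α / weight f (j :: α)) • e (j :: α))
    (α β : Word n) (h : ¬ α <+: β) :
    ContinuousLinearMap.adjoint (opWord W α) (e β) = 0 := by
  classical
  refine lp.ext (funext fun δ => ?_)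
  have key : (ContinuousLinearMap.adjoint (opWord W α) (e β)) δ = 0 := by
    rw [← inner_e_left δ (ContinuousLinearMap.adjoint (opWord W α) (e β)),
      ContinuousLinearMap.adjoint_inner_right,
      opWord_apply_e f W hW α δ,
      RCLike.real_smul_eq_coe_smul (K := ℂ), inner_smul_left, RCLike.conj_ofReal,
      inner_e_left, e_apply]
    rw [if_neg (fun hc => h ⟨δ, hc⟩), mul_zero]
  rw [key]
  simp

end Main

set_option maxHeartbeats 1000000 in
/-- `Σ_{|α| ≥ 1} a_α W_α^f (W_α^f)* = 1 − P_∅`, where `P_∅` is the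
orthogonal projection onto the span of the vacuum vector `e_∅`. -/
theorem stmt1 {n : ℕ} (hn : 1 ≤ n) (f : NSymbol n)
    (W : Fin n → Fock n →L[ℂ] Fock n)
    (hW : ∀ (j : Fin n) (α : Word n),
      W j (e α) = Real.sqrt (weight f α / weight f (j :: α)) • e (j :: α)) :
    (∑ᶠ α ∈ {α : Word n | 1 ≤ α.length},
        f.a α • (opWord W α * ContinuousLinearMap.adjoint (opWord W α)))
      = 1 - (ℂ ∙ e ([] : Word n)).subtypeL ∘L
          (Submodule.orthogonalProjection (ℂ ∙ e ([] : Word n))) := by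
  classical
  set g : Word n → (Fock n →L[ℂ] Fock n) :=
    fun α => f.a α • (opWord W α * ContinuousLinearMap.adjoint (opWord W α)) with hg
  have hsupp : ({α : Word n | 1 ≤ α.length} ∩ Function.support g).Finite := by
    refine f.finiteSupport.subset ?_
    rintro α ⟨-, hα⟩
    intro h0
    apply hα
    rw [hg]
    simp [h0]
  rw [finsum_mem_eq_sum g hsupp]
  refine clm_ext_e fun β => ?_
  rw [ContinuousLinearMap.sum_apply]
  have hterm' : ∀ α γ : Word n, (g α) (e (α ++ γ))
      = (f.a α * (weight f γ / weight f (α ++ γ))) • e (α ++ γ) := by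
    intro α γ
    rw [hg]
    simp only [ContinuousLinearMap.smul_apply, ContinuousLinearMap.mul_apply]
    rw [opWord_adjoint_apply_prefix f W hW α γ, ContinuousLinearMap.map_smul_of_tower,
      opWord_apply_e f W hW α γ, smul_smul, smul_smul, mul_assoc,
      Real.mul_self_sqrt (div_nonneg (weight_nonneg f _) (weight_nonneg f _))]
  have hterm_nonpre : ∀ α β : Word n, ¬ α <+: β → (g α) (e β) = 0 := by
    intro α β hnp
    rw [hg]
    simp only [ContinuousLinearMap.smul_apply, ContinuousLinearMap.mul_apply]
    rw [opWord_adjoint_apply_nonprefix f W hW α β hnp]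
    simp
  rcases eq_or_ne β [] with rfl | hβ
  · -- β = []
    have hzero : ∀ α ∈ hsupp.toFinset, (g α) (e ([] : Word n)) = 0 := by
      intro α hα
      rw [Set.Finite.mem_toFinset] at hα
      obtain ⟨h1, -⟩ := hα
      refine hterm_nonpre α [] ?_
      intro hp
      have : α = [] := List.eq_nil_of_prefix_nil hp
      rw [this] at h1
      simp at h1
    rw [Finset.sum_eq_zero hzero]
    have hproj : (Submodule.orthogonalProjection (ℂ ∙ e ([] : Word n)) (e ([] : Word n)) : Fock n)
        = e ([] : Word n) := by
      rw [show ((Submodule.orthogonalProjection (ℂ ∙ e ([] : Word n))) (e ([] : Word n)) : Fock n)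
          = (ℂ ∙ e ([] : Word n)).starProjection (e ([] : Word n)) from rfl,
        Submodule.starProjection_singleton, inner_e_left, e_apply, if_pos rfl, norm_e]
      norm_num
    simp only [ContinuousLinearMap.sub_apply, ContinuousLinearMap.one_apply,
      ContinuousLinearMap.comp_apply, Submodule.subtypeL_apply, hproj]
    rw [sub_self]
  · -- β ≠ []
    set m := β.length with hm
    have hm1 : 1 ≤ m := List.length_pos_iff.mpr hβ
    set P : Finset (Word n) := (Finset.Icc 1 m).image (fun k => β.take k) with hP
    have step1 : ∑ α ∈ hsupp.toFinset, (g α) (e β)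
        = ∑ α ∈ hsupp.toFinset ∪ P, (g α) (e β) := by
      refine Finset.sum_subset Finset.subset_union_left ?_
      intro α hmem hnot
      have : g α = 0 := by
        by_contra hne
        have hαP : α ∈ P := by
          rcases Finset.mem_union.mp hmem with h | h
          · exact absurd h hnot
          · exact h
        obtain ⟨k, hk, rfl⟩ := Finset.mem_image.mp hαP
        obtain ⟨hk1, hk2⟩ := Finset.mem_Icc.mp hk
        have hlen : 1 ≤ (β.take k).length := by
          rw [List.length_take]
          omega
        exact hnot ((Set.Finite.mem_toFinset _).mpr ⟨hlen, hne⟩)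
      rw [this]
      simp
    have step2 : ∑ α ∈ hsupp.toFinset ∪ P, (g α) (e β) = ∑ α ∈ P, (g α) (e β) := by
      refine (Finset.sum_subset Finset.subset_union_right ?_).symm
      intro α hmem hnot
      have hαt : α ∈ hsupp.toFinset := by
        rcases Finset.mem_union.mp hmem with h | h
        · exact h
        · exact absurd h hnot
      rw [Set.Finite.mem_toFinset] at hαt
      obtain ⟨h1, -⟩ := hαt
      refine hterm_nonpre α β ?_
      intro hp
      apply hnot
      have heq : α = β.take α.length := List.prefix_iff_eq_take.mp hp
      exact Finset.mem_image.mpr ⟨α.length, Finset.mem_Icc.mpr ⟨h1, hp.length_le⟩, heq.symm⟩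
    have hinj : ∀ k₁ ∈ Finset.Icc 1 m, ∀ k₂ ∈ Finset.Icc 1 m, β.take k₁ = β.take k₂ → k₁ = k₂ := by
      intro k₁ h₁ k₂ h₂ h
      obtain ⟨-, hh1⟩ := Finset.mem_Icc.mp h₁
      obtain ⟨-, hh2⟩ := Finset.mem_Icc.mp h₂
      have := congrArg List.length h
      rw [List.length_take, List.length_take] at this
      omega
    have step3 : ∑ α ∈ P, (g α) (e β) = ∑ k ∈ Finset.Icc 1 m, (g (β.take k)) (e β) :=
      Finset.sum_image hinj
    have hterm : ∀ k ∈ Finset.Icc 1 m, (g (β.take k)) (e β)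
        = (f.a (β.take k) * (weight f (β.drop k) / weight f β)) • e β := by
      intro k hk
      have h := hterm' (β.take k) (β.drop k)
      rw [List.take_append_drop] at h
      exact h
    have hsum : ∑ k ∈ Finset.Icc 1 m, f.a (β.take k) * (weight f (β.drop k) / weight f β) = 1 := by
      have hrw : ∀ k, f.a (β.take k) * (weight f (β.drop k) / weight f β)
          = f.a (β.take k) * weight f (β.drop k) / weight f β := fun k => by ring
      simp_rw [hrw]
      rw [← Finset.sum_div, ← weight_rec f β hβ, div_self (weight_pos f β).ne']
    rw [step1, step2, step3]
    rw [Finset.sum_congr rfl hterm]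
    rw [← Finset.sum_smul]
    rw [hsum]
    rw [one_smul]
    have hproj : (Submodule.orthogonalProjection (ℂ ∙ e ([] : Word n)) (e β) : Fock n) = 0 := by
      rw [show ((Submodule.orthogonalProjection (ℂ ∙ e ([] : Word n))) (e β) : Fock n)
          = (ℂ ∙ e ([] : Word n)).starProjection (e β) from rfl,
        Submodule.starProjection_singleton, inner_e_left, e_apply,
        if_neg (fun h => hβ h.symm)]
      simp
    simp only [ContinuousLinearMap.sub_apply, ContinuousLinearMap.one_apply,
      ContinuousLinearMap.comp_apply, Submodule.subtypeL_apply, hproj, sub_zero]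
end

section
/- Let f = Σ_α a_α X_α be an n-symbol with associated weights (b_α). For each j ∈ {1,…,n}, the assignment e_α ↦ √(b_α / b_{j·α}) e_{j·α} on the orthonormal basis (e_α) extends to a bounded linear operator W_j^f on ℓ²(𝔽₊ⁿ), and its operator norm equals sup_{α ∈ 𝔽₊ⁿ} √(b_α / b_{j·α}), which is at most a_j^{−1/2}, where a_j is the coefficient of f at the single-letter word j. -/
open scoped ENNReal

namespace Stmt4Aux

variable {n : ℕ}

def factSet (α : Word n) : Set (List (Word n)) :=
  {L | L.flatten = α ∧ 1 ≤ L.length ∧ ∀ γ ∈ L, γ ≠ ([] : Word n)}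

lemma length_le_sum_of_one_le (l : List ℕ) (h : ∀ x ∈ l, 1 ≤ x) : l.length ≤ l.sum := by
  induction l with
  | nil => simp
  | cons a t ih =>
    simp only [List.length_cons, List.sum_cons]
    have := h a (by simp)
    have := ih (fun x hx => h x (by simp [hx]))
    omega

lemma factSet_finite (α : Word n) : (factSet α).Finite := by
  classical
  set S : Set (Word n) := {γ | γ.Sublist α} with hSdef
  have hS : S.Finite := by
    apply (α.sublists.finite_toSet).subset
    intro γ hγ
    exact List.mem_sublists.mpr hγ
  haveI : Finite ↥S := hS.to_subtype
  have hfin : {L : List ↥S | L.length ≤ α.length}.Finite := List.finite_length_le ↥S α.length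
  apply ((hfin.image (fun L : List ↥S => L.map Subtype.val))).subset
  rintro L ⟨h1, _h2, h3⟩
  have hmem : ∀ γ ∈ L, γ ∈ S := by
    intro γ hγ
    have := (List.infix_of_mem_flatten hγ).sublist
    rw [h1] at this
    exact this
  refine ⟨L.pmap (fun γ h => (⟨γ, h⟩ : ↥S)) hmem, ?_, ?_⟩
  · show (L.pmap _ hmem).length ≤ α.length
    rw [List.length_pmap, ← h1, List.length_flatten]
    have : L.length = (L.map List.length).length := by simp
    rw [this]
    apply length_le_sum_of_one_le
    intro x hx
    simp only [List.mem_map] at hx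
    obtain ⟨γ, hγ, rfl⟩ := hx
    have := h3 γ hγ
    cases γ with
    | nil => exact absurd rfl this
    | cons _ _ => simp
  · show List.map Subtype.val (List.pmap (fun γ h => (⟨γ, h⟩ : ↥S)) L hmem) = L
    rw [List.map_pmap]
    simpa using List.pmap_eq_map _ id L hmem


lemma prod_map_nonneg (f : NSymbol n) (L : List (Word n)) : 0 ≤ (L.map f.a).prod := by
  induction L with
  | nil => simp
  | cons γ t ih => simpa using mul_nonneg (f.nonneg γ) ih

lemma weight_eq_sum (f : NSymbol n) {α : Word n} (hα : α ≠ []) :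
    weight f α = ∑ L ∈ (factSet_finite α).toFinset, (L.map f.a).prod := by
  rw [weight, if_neg hα]
  exact finsum_mem_eq_finite_toFinset_sum _ (factSet_finite α)

lemma singletons_mem (α : Word n) (hα : α ≠ []) :
    (α.map fun x => [x]) ∈ (factSet_finite α).toFinset := by
  rw [Set.Finite.mem_toFinset]
  refine ⟨?_, ?_, ?_⟩
  · clear hα
    induction α with
    | nil => simp
    | cons a t ih => simp [ih]
  · cases α with
    | nil => exact absurd rfl hα
    | cons a t => simp
  · intro γ hγ
    simp only [List.mem_map] at hγ
    obtain ⟨x, _, rfl⟩ := hγ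
    simp

lemma weight_pos (f : NSymbol n) (α : Word n) : 0 < weight f α := by
  rcases eq_or_ne α [] with rfl | hα
  · simp [weight]
  · rw [weight_eq_sum f hα]
    have hterm : 0 < ((α.map fun x => [x]).map f.a).prod := by
      apply List.prod_pos
      intro x hx
      simp only [List.map_map, List.mem_map] at hx
      obtain ⟨y, _, rfl⟩ := hx
      exact f.pos_single y
    calc (0:ℝ) < ((α.map fun x => [x]).map f.a).prod := hterm
      _ ≤ _ := Finset.single_le_sum (fun L _ => prod_map_nonneg f L) (singletons_mem α hα)

lemma le_weight_cons (f : NSymbol n) (j : Fin n) (α : Word n) :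
    f.a [j] * weight f α ≤ weight f (j :: α) := by
  classical
  rcases eq_or_ne α [] with rfl | hα
  · rw [weight, if_pos rfl, mul_one, weight_eq_sum f (by simp : ([j] : Word n) ≠ [])]
    have hmem : ([[j]] : List (Word n)) ∈ (factSet_finite ([j] : Word n)).toFinset := by
      rw [Set.Finite.mem_toFinset]
      exact ⟨by simp, by simp, by simp⟩
    have := Finset.single_le_sum (f := fun L : List (Word n) => (L.map f.a).prod)
      (fun L _ => prod_map_nonneg f L) hmem
    simpa using this
  · rw [weight_eq_sum f hα, weight_eq_sum f (by simp : (j :: α : Word n) ≠ [])]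
    have hinj : Function.Injective (fun L : List (Word n) => ([j] : Word n) :: L) :=
      fun L M h => by simpa using h
    have hsub : (factSet_finite α).toFinset.image (fun L => ([j] : Word n) :: L)
        ⊆ (factSet_finite (j :: α)).toFinset := by
      intro L hL
      simp only [Finset.mem_image, Set.Finite.mem_toFinset] at hL ⊢
      obtain ⟨M, ⟨h1, h2, h3⟩, rfl⟩ := hL
      refine ⟨by simp [h1], by simp, ?_⟩
      intro γ hγ
      rcases List.mem_cons.mp hγ with rfl | h
      · simp
      · exact h3 γ h
    calc f.a [j] * ∑ L ∈ (factSet_finite α).toFinset, (L.map f.a).prod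
        = ∑ L ∈ (factSet_finite α).toFinset, (((([j] : Word n) :: L)).map f.a).prod := by
          rw [Finset.mul_sum]; apply Finset.sum_congr rfl; intro L _; simp [mul_comm]
      _ = ∑ L ∈ (factSet_finite α).toFinset.image (fun L => ([j] : Word n) :: L),
            (L.map f.a).prod :=
          (Finset.sum_image (f := fun L : List (Word n) => (L.map f.a).prod)
            (fun _ _ _ _ h => hinj h)).symm
      _ ≤ _ := Finset.sum_le_sum_of_subset_of_nonneg hsub
            (fun L _ _ => prod_map_nonneg f L)



noncomputable def shiftFun (c : Word n → ℝ) (j : Fin n) (x : Word n → ℂ) : Word n → ℂ :=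
  fun β => match β with
  | [] => 0
  | i :: γ => if i = j then (c γ : ℂ) * x γ else 0

lemma shiftFun_cons (c : Word n → ℝ) (j : Fin n) (x : Word n → ℂ) (γ : Word n) :
    shiftFun c j x (j :: γ) = (c γ : ℂ) * x γ := by simp [shiftFun]

lemma shiftFun_eq_zero (c : Word n → ℝ) (j : Fin n) (x : Word n → ℂ) {β : Word n}
    (hβ : β ∉ Set.range (fun γ : Word n => j :: γ)) : shiftFun c j x β = 0 := by
  cases β with
  | nil => rfl
  | cons i γ =>
    have hi : i ≠ j := by
      rintro rfl
      exact hβ ⟨γ, rfl⟩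
    simp [shiftFun, hi]

lemma cons_injective (j : Fin n) : Function.Injective (fun γ : Word n => j :: γ) :=
  fun γ δ h => by simpa using h

lemma summable_sq (x : Fock n) :
    Summable fun γ : Word n => ‖x γ‖ ^ (2:ℝ) := by
  have := (lp.memℓp x).summable (p := 2) (by norm_num)
  simpa using this

lemma shift_term_le (c : Word n → ℝ) (hc : ∀ α, 0 ≤ c α) {C : ℝ} (hC : ∀ α, c α ≤ C)
    (j : Fin n) (x : Word n → ℂ) (γ : Word n) :
    ‖shiftFun c j x (j :: γ)‖ ^ (2:ℝ) ≤ C ^ (2:ℝ) * ‖x γ‖ ^ (2:ℝ) := by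
  rw [shiftFun_cons, ← Real.mul_rpow (le_trans (hc γ) (hC γ)) (norm_nonneg _)]
  apply Real.rpow_le_rpow (norm_nonneg _) _ (by norm_num)
  rw [norm_mul, Complex.norm_real, Real.norm_eq_abs, abs_of_nonneg (hc γ)]
  exact mul_le_mul_of_nonneg_right (hC γ) (norm_nonneg _)

lemma shift_memℓp (c : Word n → ℝ) (hc : ∀ α, 0 ≤ c α) {C : ℝ} (hC : ∀ α, c α ≤ C)
    (j : Fin n) (x : Fock n) : Memℓp (shiftFun c j (⇑x)) 2 := by
  rw [memℓp_gen_iff (by norm_num : 0 < ((2:ℝ≥0∞)).toReal)]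
  have h2 : ((2:ℝ≥0∞)).toReal = (2:ℝ) := by norm_num
  rw [h2]
  rw [← (cons_injective (n := n) j).summable_iff
    (f := fun β => ‖shiftFun c j (⇑x) β‖ ^ (2:ℝ))
    (fun β hβ => by
      show ‖shiftFun c j (⇑x) β‖ ^ (2:ℝ) = 0
      rw [shiftFun_eq_zero c j (⇑x) hβ]; simp [Real.zero_rpow])]
  apply Summable.of_nonneg_of_le (fun γ => by positivity)
    (fun γ => shift_term_le c hc hC j (⇑x) γ)
  exact (summable_sq x).mul_left _

lemma toReal_two : ((2:ℝ≥0∞)).toReal = (2:ℝ) := by norm_num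

lemma shift_summable_comp (c : Word n → ℝ) (hc : ∀ α, 0 ≤ c α) {C : ℝ}
    (hC : ∀ α, c α ≤ C) (j : Fin n) (x : Fock n) :
    Summable (fun γ : Word n => ‖shiftFun c j (⇑x) (j :: γ)‖ ^ (2:ℝ)) := by
  have := ((memℓp_gen_iff (by norm_num : 0 < ((2:ℝ≥0∞)).toReal)).mp
    (shift_memℓp c hc hC j x)).comp_injective (cons_injective (n := n) j)
  simp only [toReal_two] at this
  exact this

lemma shift_tsum_le (c : Word n → ℝ) (hc : ∀ α, 0 ≤ c α) {C : ℝ} (hC0 : 0 ≤ C)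
    (hC : ∀ α, c α ≤ C) (j : Fin n) (x : Fock n) :
    ∑' β : Word n, ‖shiftFun c j (⇑x) β‖ ^ (2:ℝ) ≤ (C * ‖x‖) ^ (2:ℝ) := by
  have hsupp : Function.support (fun β : Word n => ‖shiftFun c j (⇑x) β‖ ^ (2:ℝ))
      ⊆ Set.range (fun γ : Word n => j :: γ) := by
    intro β hβ
    by_contra h
    apply hβ
    show ‖shiftFun c j (⇑x) β‖ ^ (2:ℝ) = 0
    rw [shiftFun_eq_zero c j (⇑x) h]
    simp [Real.zero_rpow]
  rw [← (cons_injective (n := n) j).tsum_eq hsupp]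
  have hsum2 : Summable (fun γ : Word n => C ^ (2:ℝ) * ‖x γ‖ ^ (2:ℝ)) :=
    (summable_sq x).mul_left _
  calc ∑' γ : Word n, ‖shiftFun c j (⇑x) (j :: γ)‖ ^ (2:ℝ)
      ≤ ∑' γ : Word n, C ^ (2:ℝ) * ‖x γ‖ ^ (2:ℝ) :=
        Summable.tsum_le_tsum (shift_term_le c hc hC j (⇑x))
          (shift_summable_comp c hc hC j x) hsum2
    _ = C ^ (2:ℝ) * ∑' γ : Word n, ‖x γ‖ ^ (2:ℝ) := tsum_mul_left
    _ = (C * ‖x‖) ^ (2:ℝ) := by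
        rw [Real.mul_rpow hC0 (norm_nonneg _)]
        congr 1
        have := lp.norm_rpow_eq_tsum (p := 2)
          (by norm_num : 0 < ((2:ℝ≥0∞)).toReal) x
        rw [toReal_two] at this
        rw [this]

lemma shift_norm_le (c : Word n → ℝ) (hc : ∀ α, 0 ≤ c α) {C : ℝ} (hC0 : 0 ≤ C)
    (hC : ∀ α, c α ≤ C) (j : Fin n) (x : Fock n) :
    ‖(⟨shiftFun c j (⇑x), shift_memℓp c hc hC j x⟩ : Fock n)‖ ≤ C * ‖x‖ := by
  apply lp.norm_le_of_tsum_le (by norm_num : 0 < ((2:ℝ≥0∞)).toReal)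
    (mul_nonneg hC0 (norm_nonneg _))
  rw [toReal_two]
  exact shift_tsum_le c hc hC0 hC j x


noncomputable def shiftL (c : Word n → ℝ) (hc : ∀ α, 0 ≤ c α) {C : ℝ}
    (hC : ∀ α, c α ≤ C) (j : Fin n) : Fock n →ₗ[ℂ] Fock n where
  toFun x := ⟨shiftFun c j (⇑x), shift_memℓp c hc hC j x⟩
  map_add' x y := by
    apply lp.ext
    funext β
    show shiftFun c j (⇑(x + y)) β = shiftFun c j (⇑x) β + shiftFun c j (⇑y) β
    rw [lp.coeFn_add]
    cases β with
    | nil => show (0:ℂ) = 0 + 0; ring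
    | cons i γ =>
      show (if i = j then (c γ : ℂ) * (⇑x + ⇑y) γ else 0) = _
      by_cases hi : i = j <;> simp [shiftFun, hi, mul_add]
  map_smul' r x := by
    apply lp.ext
    funext β
    show shiftFun c j (⇑(r • x)) β = r • shiftFun c j (⇑x) β
    rw [lp.coeFn_smul]
    cases β with
    | nil => show (0:ℂ) = r • 0; simp
    | cons i γ =>
      by_cases hi : i = j <;> simp [shiftFun, hi, smul_eq_mul] <;> ring

theorem stmt4' {n : ℕ} (f : NSymbol n) (j : Fin n) :
    ∃ W : Fock n →L[ℂ] Fock n,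
      (∀ α : Word n, W (e α) = Real.sqrt (weight f α / weight f (j :: α)) • e (j :: α)) ∧
      ‖W‖ = ⨆ α : Word n, Real.sqrt (weight f α / weight f (j :: α)) ∧
      ‖W‖ ≤ (Real.sqrt (f.a [j]))⁻¹ := by
  classical
  set c : Word n → ℝ := fun α => Real.sqrt (weight f α / weight f (j :: α)) with hc_def
  have hc0 : ∀ α, 0 ≤ c α := fun α => Real.sqrt_nonneg _
  have hM : ∀ α, c α ≤ (Real.sqrt (f.a [j]))⁻¹ := by
    intro α
    rw [← Real.sqrt_inv]
    apply Real.sqrt_le_sqrt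
    rw [div_le_iff₀ (weight_pos f (j :: α)), inv_mul_eq_div, le_div_iff₀ (f.pos_single j)]
    calc weight f α * f.a [j] = f.a [j] * weight f α := mul_comm _ _
      _ ≤ weight f (j :: α) := le_weight_cons f j α
  set C : ℝ := ⨆ α : Word n, c α with hC_def
  have hbdd : BddAbove (Set.range c) := ⟨_, by rintro _ ⟨α, rfl⟩; exact hM α⟩
  have hcC : ∀ α, c α ≤ C := fun α => le_ciSup hbdd α
  have hC0 : 0 ≤ C := le_trans (hc0 []) (hcC [])
  let T : Fock n →ₗ[ℂ] Fock n := shiftL c hc0 hcC j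
  let W : Fock n →L[ℂ] Fock n :=
    T.mkContinuous C (fun x => shift_norm_le c hc0 hC0 hcC j x)
  have hnorm_e : ∀ β : Word n, ‖e β‖ = 1 := by
    intro β
    have := lp.norm_single (p := 2) (E := fun _ : Word n => ℂ) (by norm_num : (0:ℝ≥0∞) < 2)
      β (1:ℂ)
    simpa [e] using this
  have hWe : ∀ α : Word n, W (e α) = c α • e (j :: α) := by
    intro α
    apply lp.ext
    funext β
    show shiftFun c j (⇑(e α)) β = (c α • e (j :: α) : Fock n) β
    rw [lp.coeFn_smul]
    cases β with
    | nil =>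
      have : (e (j :: α) : ∀ _ : Word n, ℂ) [] = 0 :=
        lp.single_apply_ne 2 (j :: α) 1 (by simp)
      show (0:ℂ) = c α • (e (j :: α) : ∀ _ : Word n, ℂ) []
      rw [this, smul_zero]
    | cons i γ =>
      show (if i = j then (c γ : ℂ) * (e α : ∀ _ : Word n, ℂ) γ else 0)
          = c α • (e (j :: α) : ∀ _ : Word n, ℂ) (i :: γ)
      by_cases hi : i = j
      · subst hi
        by_cases hγ : γ = α
        · subst hγ
          rw [if_pos rfl]
          have h1 : (e γ : ∀ _ : Word n, ℂ) γ = 1 := lp.single_apply_self 2 γ 1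
          have h2 : (e (i :: γ) : ∀ _ : Word n, ℂ) (i :: γ) = 1 :=
            lp.single_apply_self 2 (i :: γ) 1
          rw [h1, h2, mul_one, Complex.real_smul, mul_one]
        · rw [if_pos rfl]
          have h1 : (e α : ∀ _ : Word n, ℂ) γ = 0 := lp.single_apply_ne 2 α 1 hγ
          have h2 : (e (i :: α) : ∀ _ : Word n, ℂ) (i :: γ) = 0 :=
            lp.single_apply_ne 2 (i :: α) 1 (by simp [hγ])
          rw [h1, h2, mul_zero, smul_zero]
      · rw [if_neg hi]
        have h2 : (e (j :: α) : ∀ _ : Word n, ℂ) (i :: γ) = 0 :=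
          lp.single_apply_ne 2 (j :: α) 1 (by simp [hi])
        rw [h2, smul_zero]
  have hWle : ‖W‖ ≤ C := LinearMap.mkContinuous_norm_le T hC0 _
  have hlow : ∀ α : Word n, c α ≤ ‖W‖ := by
    intro α
    have h1 : ‖W (e α)‖ = c α := by
      rw [hWe α, norm_smul, Real.norm_eq_abs, abs_of_nonneg (hc0 α), hnorm_e, mul_one]
    calc c α = ‖W (e α)‖ := h1.symm
      _ ≤ ‖W‖ * ‖e α‖ := W.le_opNorm _
      _ = ‖W‖ := by rw [hnorm_e, mul_one]
  have hWC : ‖W‖ = C := le_antisymm hWle (ciSup_le hlow)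
  exact ⟨W, hWe, hWC, hWC ▸ ciSup_le hM⟩

end Stmt4Aux

/-- the assignment `e_α ↦ √(b_α / b_{j·α}) e_{j·α}` extends to a bounded
operator `W_j^f` on `ℓ²(𝔽₊ⁿ)`, of norm `sup_α √(b_α / b_{j·α}) ≤ a_j^{-1/2}`. -/
theorem stmt4 {n : ℕ} (hn : 1 ≤ n) (f : NSymbol n) (j : Fin n) :
    ∃ W : Fock n →L[ℂ] Fock n,
      (∀ α : Word n, W (e α) = Real.sqrt (weight f α / weight f (j :: α)) • e (j :: α)) ∧
      ‖W‖ = ⨆ α : Word n, Real.sqrt (weight f α / weight f (j :: α)) ∧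
      ‖W‖ ≤ (Real.sqrt (f.a [j]))⁻¹ :=
  Stmt4Aux.stmt4' f j
end

section
/- Let n ≥ 1, let ω ∈ ℂⁿ with 0 < ‖ω‖ < 1, and let z ∈ ℂⁿ with z ≠ ω. Then ‖ψ_ω(z)‖² = 1 + (1 − ‖ω‖²)(1 − ‖z‖²)/‖ω − z‖². -/
/-- `ψ_ω(z) = ω + (1 − ‖ω‖²)(ω − z)/‖ω − z‖²` on `ℂⁿ` (meaningful for `z ≠ ω`). -/
noncomputable def psi {n : ℕ} (ω z : EuclideanSpace ℂ (Fin n)) : EuclideanSpace ℂ (Fin n) :=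
  ω + ((1 - ‖ω‖ ^ 2) / ‖ω - z‖ ^ 2) • (ω - z)

/-- `φ_ω(z) = ψ_ω(z)/‖ψ_ω(z)‖²` (meaningful whenever `ψ_ω(z) ≠ 0`). -/
noncomputable def phi {n : ℕ} (ω z : EuclideanSpace ℂ (Fin n)) : EuclideanSpace ℂ (Fin n) :=
  (‖psi ω z‖ ^ 2)⁻¹ • psi ω z

local notation "⟪" x ", " y "⟫_ℂ" => @inner ℂ _ _ x y

open RCLike in
/-- `‖ψ_ω(z)‖² = 1 + (1 − ‖ω‖²)(1 − ‖z‖²)/‖ω − z‖²` for `z ≠ ω`. -/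
theorem stmt12 {n : ℕ} (hn : 1 ≤ n) (ω : EuclideanSpace ℂ (Fin n))
    (hω0 : 0 < ‖ω‖) (hω1 : ‖ω‖ < 1)
    (z : EuclideanSpace ℂ (Fin n)) (hz : z ≠ ω) :
    ‖psi ω z‖ ^ 2 = 1 + (1 - ‖ω‖ ^ 2) * (1 - ‖z‖ ^ 2) / ‖ω - z‖ ^ 2 := by
  rw [psi]
  set c : ℝ := (1 - ‖ω‖ ^ 2) / ‖ω - z‖ ^ 2 with hc
  have hd : ‖ω - z‖ ≠ 0 := by
    simp [sub_eq_zero]; exact fun h => hz h.symm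
  have h1 : ‖ω + c • (ω - z)‖ ^ 2
      = ‖ω‖ ^ 2 + 2 * re (⟪ω, c • (ω - z)⟫_ℂ) + ‖c • (ω - z)‖ ^ 2 :=
    norm_add_sq ω (c • (ω - z))
  have h2 : re (⟪ω, c • (ω - z)⟫_ℂ) = c * re (⟪ω, ω - z⟫_ℂ) := by
    rw [real_smul_eq_coe_smul (K := ℂ), inner_smul_right]
    exact RCLike.re_ofReal_mul _ _
  have h3 : ‖ω - z‖ ^ 2 = ‖ω‖ ^ 2 - 2 * re (⟪ω, z⟫_ℂ) + ‖z‖ ^ 2 := norm_sub_sq ω z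
  have h4 : re (⟪ω, ω - z⟫_ℂ) = ‖ω‖ ^ 2 - re (⟪ω, z⟫_ℂ) := by
    rw [inner_sub_right, map_sub, inner_self_eq_norm_sq]
  have h5 : ‖c • (ω - z)‖ ^ 2 = c ^ 2 * ‖ω - z‖ ^ 2 := by
    rw [norm_smul]; rw [mul_pow]; simp [sq_abs]
  have ht : re (⟪ω, z⟫_ℂ) = (‖ω‖ ^ 2 + ‖z‖ ^ 2 - ‖ω - z‖ ^ 2) / 2 := by linarith
  rw [h1, h2, h4, h5, ht, hc]
  have hd2 : ‖ω - z‖ ^ 2 ≠ 0 := pow_ne_zero _ hd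
  field_simp
  ring
end

section
/- Let n ≥ 1 and let ω ∈ ℂⁿ with 0 < ‖ω‖ < 1. For every z ∈ ℂⁿ with z ≠ ω: (i) if ‖z‖ < 1 then ‖ψ_ω(z)‖ > 1, so φ_ω(z) is well defined and ‖φ_ω(z)‖ < 1; (ii) if ‖z‖ = 1 then ‖ψ_ω(z)‖ = 1 and ‖φ_ω(z)‖ = 1. In particular φ_ω maps the open unit ball of ℂⁿ minus {ω} into the open unit ball and the unit sphere into the unit sphere. -/
lemma aux_norm {n : ℕ} (x y : EuclideanSpace ℂ (Fin n)) (r : ℝ) :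
    ‖x + r • y‖ ^ 2 = ‖x‖ ^ 2 + 2 * (r * Complex.re (inner ℂ x y : ℂ)) + r ^ 2 * ‖y‖ ^ 2 := by
  rw [norm_add_sq (𝕜 := ℂ), ← Complex.coe_smul, inner_smul_right, norm_smul]
  simp [mul_pow]

lemma psi_norm_sq {n : ℕ} (ω z : EuclideanSpace ℂ (Fin n)) (hz : z ≠ ω) :
    ‖psi ω z‖ ^ 2 = 1 + (1 - ‖ω‖ ^ 2) * (1 - ‖z‖ ^ 2) / ‖ω - z‖ ^ 2 := by
  have hne : ω - z ≠ 0 := sub_ne_zero.mpr (Ne.symm hz)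
  have hd0 : (0:ℝ) < ‖ω - z‖ ^ 2 := by
    have := norm_pos_iff.mpr hne
    positivity
  have hd : ‖ω - z‖ ^ 2 ≠ 0 := ne_of_gt hd0
  set t : ℝ := Complex.re (inner ℂ ω (ω - z) : ℂ) with ht
  have hz2 : ‖z‖ ^ 2 = ‖ω‖ ^ 2 - 2 * t + ‖ω - z‖ ^ 2 := by
    have h := norm_sub_sq (𝕜 := ℂ) ω (ω - z)
    rw [sub_sub_cancel] at h
    rw [h, ht]
    rfl
  have hpsi : ‖psi ω z‖ ^ 2 = ‖ω‖ ^ 2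
      + 2 * ((1 - ‖ω‖ ^ 2) / ‖ω - z‖ ^ 2 * t)
      + ((1 - ‖ω‖ ^ 2) / ‖ω - z‖ ^ 2) ^ 2 * ‖ω - z‖ ^ 2 := by
    rw [psi, aux_norm, ht]
  rw [hpsi, hz2]
  field_simp
  ring

/-- for `z ≠ ω`, if `‖z‖ < 1` then `‖ψ_ω(z)‖ > 1` (so `φ_ω(z)` is
defined) and `‖φ_ω(z)‖ < 1`; if `‖z‖ = 1` then `‖ψ_ω(z)‖ = 1` and `‖φ_ω(z)‖ = 1`. -/
theorem stmt13 {n : ℕ} (hn : 1 ≤ n) (ω : EuclideanSpace ℂ (Fin n))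
    (hω0 : 0 < ‖ω‖) (hω1 : ‖ω‖ < 1)
    (z : EuclideanSpace ℂ (Fin n)) (hz : z ≠ ω) :
    (‖z‖ < 1 → 1 < ‖psi ω z‖ ∧ ‖phi ω z‖ < 1) ∧
    (‖z‖ = 1 → ‖psi ω z‖ = 1 ∧ ‖phi ω z‖ = 1) := by
  have hd : 0 < ‖ω - z‖ ^ 2 := by
    have h := norm_pos_iff.mpr (sub_ne_zero.mpr (Ne.symm hz))
    positivity
  have ha : 0 < 1 - ‖ω‖ ^ 2 := by nlinarith [norm_nonneg ω]
  have hkey := psi_norm_sq ω z hz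
  constructor
  · intro hz1
    have hb : 0 < 1 - ‖z‖ ^ 2 := by nlinarith [norm_nonneg z]
    have hgt : 1 < ‖psi ω z‖ ^ 2 := by
      rw [hkey]; have : 0 < (1 - ‖ω‖ ^ 2) * (1 - ‖z‖ ^ 2) / ‖ω - z‖ ^ 2 := by positivity
      linarith
    have h1 : 1 < ‖psi ω z‖ := by nlinarith [norm_nonneg (psi ω z)]
    refine ⟨h1, ?_⟩
    rw [phi, norm_smul]
    have hpos : (0:ℝ) < ‖psi ω z‖ := by linarith
    rw [Real.norm_eq_abs, abs_inv, abs_of_pos (by positivity)]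
    rw [inv_mul_lt_iff₀ (by positivity)]
    nlinarith
  · intro hz1
    have heq : ‖psi ω z‖ ^ 2 = 1 := by rw [hkey, hz1]; ring
    have h1 : ‖psi ω z‖ = 1 := by nlinarith [norm_nonneg (psi ω z)]
    refine ⟨h1, ?_⟩
    rw [phi, norm_smul, h1]
    simp
end

section
/- (Cartan) Let n ≥ 1 and let B_n = {z ∈ ℂⁿ : ‖z‖ < 1} be the open unit ball of ℂⁿ for the standard hermitian norm. Let h : B_n → B_n be a bijective holomorphic map whose inverse is also holomorphic, and suppose h(0) = 0. Then h is the restriction to B_n of a unitary linear map of ℂⁿ: there exists a unitary U ∈ U(n) such that h(z) = Uz for all z ∈ B_n. -/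
open Metric Set Complex Filter Asymptotics Topology
open scoped NNReal

set_option linter.unusedSectionVars false
set_option linter.unusedVariables false
set_option maxHeartbeats 1000000

section CartanAux

variable {E : Type*} [NormedAddCommGroup E] [NormedSpace ℂ E] [CompleteSpace E]

/-- Cauchy estimate on the coefficients. -/
lemma cauchy_coeff_norm_le {g : ℂ → E} {t M : ℝ} (ht : 0 < t)
    (hb : ∀ θ : ℝ, ‖g (circleMap 0 t θ)‖ ≤ M) (j : ℕ) :
    ‖cauchyPowerSeries g 0 t j‖ ≤ M / t ^ j := by
  have hM : 0 ≤ M := (norm_nonneg _).trans (hb 0)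
  have h1 := norm_cauchyPowerSeries_le g 0 t j
  have hint : (∫ θ : ℝ in (0:ℝ)..2 * Real.pi, ‖g (circleMap 0 t θ)‖) ≤ 2 * Real.pi * M := by
    have h2 := intervalIntegral.norm_integral_le_of_norm_le_const
      (C := M) (f := fun θ : ℝ => ‖g (circleMap 0 t θ)‖) (a := 0) (b := 2 * Real.pi)
      (fun x _ => by simpa using hb x)
    calc (∫ θ : ℝ in (0:ℝ)..2 * Real.pi, ‖g (circleMap 0 t θ)‖)
        ≤ ‖∫ θ : ℝ in (0:ℝ)..2 * Real.pi, ‖g (circleMap 0 t θ)‖‖ := le_abs_self _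
      _ ≤ M * |2 * Real.pi - 0| := h2
      _ = 2 * Real.pi * M := by
          rw [sub_zero, abs_of_pos Real.two_pi_pos]; ring
  refine h1.trans ?_
  have h2p : (0:ℝ) < (2 * Real.pi)⁻¹ := by positivity
  have : (2 * Real.pi)⁻¹ * (∫ θ : ℝ in (0:ℝ)..2 * Real.pi, ‖g (circleMap 0 t θ)‖)
      ≤ M := by
    rw [inv_mul_le_iff₀ (by positivity)]
    calc (∫ θ : ℝ in (0:ℝ)..2 * Real.pi, ‖g (circleMap 0 t θ)‖) ≤ 2 * Real.pi * M := hint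
      _ = 2 * Real.pi * M := rfl
  calc ((2 * Real.pi)⁻¹ * ∫ θ : ℝ in (0:ℝ)..2 * Real.pi, ‖g (circleMap 0 t θ)‖) * |t|⁻¹ ^ j
      ≤ M * |t|⁻¹ ^ j := by
        apply mul_le_mul_of_nonneg_right this (by positivity)
    _ = M / t ^ j := by
        rw [abs_of_pos ht, inv_pow, div_eq_mul_inv]

/-- representation with radius 1 for a function differentiable on ball 0 2 -/
lemma hasFPS_one {g : ℂ → E} (hd : DifferentiableOn ℂ g (ball 0 2)) :
    HasFPowerSeriesOnBall g (cauchyPowerSeries g 0 1) 0 1 := by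
  have hsub : closedBall (0:ℂ) ((1:ℝ≥0):ℝ) ⊆ ball (0:ℂ) 2 := by
    intro x hx
    simp only [NNReal.coe_one, mem_closedBall, mem_ball] at hx ⊢
    linarith
  have h := (hd.mono hsub).hasFPowerSeriesOnBall (R := 1) one_pos
  simpa using h

lemma hasFPS_t {g : ℂ → E} (hd : DifferentiableOn ℂ g (ball 0 2)) {t : ℝ≥0} (ht : 0 < t)
    (ht1 : (t:ℝ) ≤ 1) :
    HasFPowerSeriesOnBall g (cauchyPowerSeries g 0 t) 0 t := by
  have hsub : closedBall (0:ℂ) ((t:ℝ≥0):ℝ) ⊆ ball (0:ℂ) 2 := by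
    intro x hx
    simp only [mem_closedBall, mem_ball] at hx ⊢
    calc dist x 0 ≤ (t:ℝ) := hx
      _ < 2 := by linarith
  exact (hd.mono hsub).hasFPowerSeriesOnBall ht

/-- vanishing of coefficients from littleO -/
lemma coeff_zero_of_littleO {g : ℂ → E} (hd : DifferentiableOn ℂ g (ball 0 2)) {j : ℕ}
    (ho : g =o[𝓝 0] fun l : ℂ => l ^ j) : ∀ i ≤ j, cauchyPowerSeries g 0 1 i = 0 := by
  intro i hij
  have hp1 := hasFPS_one hd
  have key : ∀ ε : ℝ, 0 < ε → ‖cauchyPowerSeries g 0 1 i‖ ≤ ε := by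
    intro ε hε
    have hev := (isLittleO_iff.mp ho) hε
    obtain ⟨δ, hδ, hδ'⟩ := Metric.eventually_nhds_iff.mp hev
    set t : ℝ := min (δ / 2) (1 / 2) with htdef
    have ht0 : 0 < t := by positivity
    have ht1 : t ≤ 1 / 2 := min_le_right _ _
    have htδ : t < δ := lt_of_le_of_lt (min_le_left _ _) (by linarith)
    -- series at radius t
    have hpt := hasFPS_t hd (t := t.toNNReal) (by simpa using ht0) (by
      simp [Real.coe_toNNReal _ ht0.le]; linarith)
    have heqser : cauchyPowerSeries g 0 1 = cauchyPowerSeries g 0 (t.toNNReal : ℝ) :=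
      hp1.hasFPowerSeriesAt.eq_formalMultilinearSeries hpt.hasFPowerSeriesAt
    have hcoe : ((t.toNNReal : ℝ)) = t := Real.coe_toNNReal _ ht0.le
    rw [heqser, hcoe]
    have hbnd : ∀ θ : ℝ, ‖g (circleMap 0 t θ)‖ ≤ ε * t ^ j := by
      intro θ
      have hmem : dist (circleMap 0 t θ) 0 < δ := by
        simp [Complex.dist_eq, norm_circleMap_zero, abs_of_pos ht0, htδ]
      have := hδ' hmem
      calc ‖g (circleMap 0 t θ)‖ ≤ ε * ‖circleMap 0 t θ ^ j‖ := this
        _ = ε * t ^ j := by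
            rw [norm_pow]
            congr 2
            simp [norm_circleMap_zero, abs_of_pos ht0]
    have := cauchy_coeff_norm_le ht0 hbnd i
    refine this.trans ?_
    rw [div_le_iff₀ (by positivity)]
    calc ε * t ^ j ≤ ε * t ^ i := by
          apply mul_le_mul_of_nonneg_left _ hε.le
          exact pow_le_pow_of_le_one ht0.le (by linarith) hij
      _ = ε * t ^ i := rfl
  have : ‖cauchyPowerSeries g 0 1 i‖ = 0 := by
    by_contra hne
    have hpos : 0 < ‖cauchyPowerSeries g 0 1 i‖ :=
      lt_of_le_of_ne (norm_nonneg _) (Ne.symm hne)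
    have := key (‖cauchyPowerSeries g 0 1 i‖ / 2) (by positivity)
    linarith
  exact norm_eq_zero.mp this

lemma coeff_apply (g : ℂ → E) (t : ℝ) (j : ℕ) (w : ℂ) :
    (cauchyPowerSeries g 0 t j fun _ => w) = w ^ j • (cauchyPowerSeries g 0 t j fun _ => 1) := by
  simp [cauchyPowerSeries, ContinuousMultilinearMap.mkPiRing_apply, smul_smul]

/-- the `j`-th coefficient of the slice of `F` through `z`. -/
noncomputable def cc (F : E → E) (z : E) (j : ℕ) : E :=
  cauchyPowerSeries (fun l : ℂ => F (l • z)) 0 1 j fun _ => 1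

lemma slice_diff {F : E → E} (hd : DifferentiableOn ℂ F (ball 0 1)) {z : E}
    (hz : ‖z‖ = 1 / 2) :
    DifferentiableOn ℂ (fun l : ℂ => F (l • z)) (ball 0 2) := by
  have hmaps : MapsTo (fun l : ℂ => l • z) (ball 0 2) (ball (0:E) 1) := by
    intro l hl
    simp only [mem_ball, dist_zero_right] at hl ⊢
    rw [norm_smul, hz]
    have : ‖l‖ < 2 := by simpa [Complex.dist_eq] using hl
    linarith
  exact hd.comp ((differentiable_id.smul_const z).differentiableOn) hmaps

lemma slice_hasFPS {F : E → E} (hd : DifferentiableOn ℂ F (ball 0 1)) {z : E}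
    (hz : ‖z‖ = 1 / 2) :
    HasFPowerSeriesOnBall (fun l : ℂ => F (l • z))
      (cauchyPowerSeries (fun l : ℂ => F (l • z)) 0 1) 0 1 :=
  hasFPS_one (slice_diff hd hz)

lemma slice_hasSum {F : E → E} (hd : DifferentiableOn ℂ F (ball 0 1)) {z : E}
    (hz : ‖z‖ = 1 / 2) {l : ℂ} (hl : ‖l‖ < 1) :
    HasSum (fun j : ℕ => l ^ j • cc F z j) (F (l • z)) := by
  have h := (slice_hasFPS hd hz).hasSum (y := l) (by
    rw [mem_emetric_ball_zero_iff, ← ENNReal.coe_one, enorm_lt_coe, ← NNReal.coe_lt_coe]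
    simpa using hl)
  rw [zero_add] at h
  have h2 : (fun n : ℕ => (cauchyPowerSeries (fun l : ℂ => F (l • z)) 0 1 n) fun _ => l)
      = fun j : ℕ => l ^ j • cc F z j := by
    funext j
    rw [coeff_apply]
    rfl
  rw [← h2]
  exact h

lemma cc_norm_le {F : E → E} (hd : DifferentiableOn ℂ F (ball 0 1)) {z : E}
    (hz : ‖z‖ = 1 / 2) {M : ℝ}
    (hM : ∀ w : E, ‖w‖ ≤ 1 / 2 → ‖F w‖ ≤ M) (j : ℕ) : ‖cc F z j‖ ≤ M := by
  have hb : ∀ θ : ℝ, ‖(fun l : ℂ => F (l • z)) (circleMap 0 1 θ)‖ ≤ M := by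
    intro θ
    apply hM
    rw [norm_smul, hz]
    have : ‖circleMap 0 1 θ‖ = 1 := by
      simp [norm_circleMap_zero]
    rw [this]; norm_num
  have h1 := cauchy_coeff_norm_le (g := fun l : ℂ => F (l • z)) (t := 1) one_pos hb j
  have h2 : ‖cc F z j‖ ≤ ‖cauchyPowerSeries (fun l : ℂ => F (l • z)) 0 1 j‖ := by
    have := (cauchyPowerSeries (fun l : ℂ => F (l • z)) 0 1 j).le_opNorm fun _ => (1:ℂ)
    simpa [cc] using this
  refine h2.trans (h1.trans ?_)
  simp

lemma cc_zero_of_littleO {F : E → E} (hd : DifferentiableOn ℂ F (ball 0 1)) {z : E}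
    (hz : ‖z‖ = 1 / 2) {j : ℕ}
    (ho : (fun l : ℂ => F (l • z)) =o[𝓝 0] fun l : ℂ => l ^ j) :
    ∀ i ≤ j, cc F z i = 0 := by
  intro i hij
  have := coeff_zero_of_littleO (slice_diff hd hz) ho i hij
  simp [cc, this]

/-- tail estimate when the first `k+1` coefficients vanish -/
lemma slice_tail_bound {F : E → E} (hd : DifferentiableOn ℂ F (ball 0 1)) {z : E}
    (hz : ‖z‖ = 1 / 2) {M : ℝ} (hM : ∀ w : E, ‖w‖ ≤ 1 / 2 → ‖F w‖ ≤ M) {k : ℕ}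
    (hvan : ∀ j ≤ k, cc F z j = 0) {l : ℂ} (hl : ‖l‖ ≤ 1 / 2) :
    ‖F (l • z)‖ ≤ 2 * M * ‖l‖ ^ (k + 1) := by
  have hM0 : 0 ≤ M := (norm_nonneg _).trans (hM 0 (by norm_num))
  have hs := slice_hasSum hd hz (l := l) (by linarith)
  obtain ⟨t, htEq, htSum⟩ := hs.exists_hasSum_smul_of_apply_eq_zero
    (n := k + 1) (fun i hi => hvan i (Nat.lt_succ_iff.mp hi))
  have hcoef : ∀ m : ℕ, ‖l ^ m • cc F z (m + (k + 1))‖ ≤ M * (1 / 2) ^ m := by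
    intro m
    rw [norm_smul, norm_pow]
    calc ‖l‖ ^ m * ‖cc F z (m + (k + 1))‖
        ≤ (1 / 2) ^ m * M := by
          apply mul_le_mul (pow_le_pow_left₀ (norm_nonneg _) hl m)
            (cc_norm_le hd hz hM _) (norm_nonneg _) (by positivity)
      _ = M * (1 / 2) ^ m := by ring
  have hsumm : Summable fun m : ℕ => M * (1 / 2 : ℝ) ^ m :=
    (summable_geometric_of_lt_one (by norm_num) (by norm_num)).mul_left M
  have hsn : Summable fun m : ℕ => ‖l ^ m • cc F z (m + (k + 1))‖ :=
    Summable.of_nonneg_of_le (fun m => norm_nonneg _) hcoef hsumm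
  have ht : ‖t‖ ≤ 2 * M := by
    rw [← htSum.tsum_eq]
    calc ‖∑' m : ℕ, l ^ m • cc F z (m + (k + 1))‖
        ≤ ∑' m : ℕ, ‖l ^ m • cc F z (m + (k + 1))‖ := norm_tsum_le_tsum_norm hsn
      _ ≤ ∑' m : ℕ, M * (1 / 2 : ℝ) ^ m := hsn.tsum_le_tsum hcoef hsumm
      _ = M * (1 - 1 / 2)⁻¹ := by
          rw [tsum_mul_left, tsum_geometric_of_lt_one (by norm_num) (by norm_num)]
      _ = 2 * M := by norm_num; ring
  calc ‖F (l • z)‖ = ‖l ^ (k + 1) • t‖ := by rw [htEq]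
    _ = ‖l‖ ^ (k + 1) * ‖t‖ := by rw [norm_smul, norm_pow]
    _ ≤ ‖l‖ ^ (k + 1) * (2 * M) := by
        apply mul_le_mul_of_nonneg_left ht (by positivity)
    _ = 2 * M * ‖l‖ ^ (k + 1) := by ring

/-- pointwise bound from vanishing of slice coefficients -/
lemma pointwise_bound {F : E → E} (hd : DifferentiableOn ℂ F (ball 0 1))
    {M : ℝ} (hM : ∀ w : E, ‖w‖ ≤ 1 / 2 → ‖F w‖ ≤ M) {k : ℕ}
    (hvan : ∀ z : E, ‖z‖ = 1 / 2 → ∀ j ≤ k, cc F z j = 0) (hF0 : F 0 = 0) :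
    ∀ w : E, ‖w‖ ≤ 1 / 4 → ‖F w‖ ≤ 2 * M * 2 ^ (k + 1) * ‖w‖ ^ (k + 1) := by
  have hM0 : 0 ≤ M := (norm_nonneg _).trans (hM 0 (by norm_num))
  intro w hw
  rcases eq_or_ne w 0 with rfl | hw0
  · simp [hF0]
  · have hnw : 0 < ‖w‖ := norm_pos_iff.mpr hw0
    set l : ℂ := ((2 * ‖w‖ : ℝ) : ℂ) with hldef
    have hl0 : l ≠ 0 := by
      simp only [hldef, ne_eq, Complex.ofReal_eq_zero]
      positivity
    set z : E := l⁻¹ • w with hzdef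
    have hnl : ‖l‖ = 2 * ‖w‖ := by
      rw [hldef]
      rw [Complex.norm_real, Real.norm_eq_abs, abs_of_pos (by positivity)]
    have hz : ‖z‖ = 1 / 2 := by
      rw [hzdef, norm_smul, norm_inv, hnl]
      rw [inv_mul_eq_div, div_eq_iff (by positivity)]
      ring
    have hlz : l • z = w := by
      rw [hzdef, smul_smul, mul_inv_cancel₀ hl0, one_smul]
    have hl : ‖l‖ ≤ 1 / 2 := by rw [hnl]; linarith
    have := slice_tail_bound hd hz hM (hvan z hz) (l := l) hl
    rw [hlz, hnl] at this
    calc ‖F w‖ ≤ 2 * M * (2 * ‖w‖) ^ (k + 1) := this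
      _ = 2 * M * 2 ^ (k + 1) * ‖w‖ ^ (k + 1) := by rw [mul_pow]; ring

/-- additivity of slice coefficients -/
lemma cc_add {F G H : E → E} (hdF : DifferentiableOn ℂ F (ball 0 1))
    (hdG : DifferentiableOn ℂ G (ball 0 1)) (hdH : DifferentiableOn ℂ H (ball 0 1))
    {z : E} (hz : ‖z‖ = 1 / 2)
    (hsum : ∀ w ∈ ball (0 : E) 1, F w = G w + H w) (j : ℕ) :
    cc F z j = cc G z j + cc H z j := by
  have hF := (hasFPS_one (slice_diff hdF hz)).hasFPowerSeriesAt
  have hG := (hasFPS_one (slice_diff hdG hz)).hasFPowerSeriesAt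
  have hH := (hasFPS_one (slice_diff hdH hz)).hasFPowerSeriesAt
  have hGH := hG.add hH
  have heq : ∀ᶠ l : ℂ in 𝓝 0, F (l • z) = (fun l : ℂ => G (l • z)) l +
      (fun l : ℂ => H (l • z)) l := by
    filter_upwards [Metric.ball_mem_nhds (0:ℂ) one_pos] with l hl
    apply hsum
    simp only [mem_ball, dist_zero_right] at hl ⊢
    rw [norm_smul, hz]
    nlinarith [norm_nonneg l]
  have hser := hF.eq_formalMultilinearSeries_of_eventually hGH heq
  have := congrFun hser j
  calc cc F z j = (cauchyPowerSeries (fun l : ℂ => F (l • z)) 0 1 j) (fun _ => 1) := rfl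
    _ = ((cauchyPowerSeries (fun l : ℂ => G (l • z)) 0 1 +
          cauchyPowerSeries (fun l : ℂ => H (l • z)) 0 1) j) (fun _ => 1) := by rw [this]
    _ = cc G z j + cc H z j := rfl

/-- Lipschitz-type difference bound via Schwarz lemma -/
lemma diff_bound {F : E → E} (hd : DifferentiableOn ℂ F (ball 0 1)) {C : ℝ} (hC : 0 ≤ C)
    {k : ℕ} (hb : ∀ u : E, ‖u‖ ≤ 1 / 4 → ‖F u‖ ≤ C * ‖u‖ ^ k) {w w' : E}
    (hw : ‖w‖ ≤ 1 / 8) (hww' : ‖w' - w‖ < ‖w‖) :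
    ‖F w' - F w‖ ≤ 2 * C * (2 * ‖w‖) ^ k * (‖w' - w‖ / ‖w‖) := by
  have hw0 : 0 < ‖w‖ := (norm_nonneg _).trans_lt hww'
  rcases eq_or_ne w' w with rfl | hne
  · simp only [sub_self, norm_zero]
    positivity
  have hd0 : 0 < ‖w' - w‖ := by
    rw [norm_pos_iff, sub_ne_zero]; exact hne
  set d : ℝ := ‖w' - w‖ with hddef
  set R₁ : ℝ := ‖w‖ / d with hR₁def
  have hR₁ : 1 < R₁ := by
    rw [hR₁def, lt_div_iff₀ hd0]
    simpa using hww'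
  set ψ : ℂ → E := fun μ => F (w + μ • (w' - w)) with hψdef
  have hdom : ∀ μ : ℂ, μ ∈ ball (0:ℂ) R₁ → ‖w + μ • (w' - w)‖ ≤ 2 * ‖w‖ := by
    intro μ hμ
    simp only [mem_ball, dist_zero_right] at hμ
    calc ‖w + μ • (w' - w)‖ ≤ ‖w‖ + ‖μ • (w' - w)‖ := norm_add_le _ _
      _ = ‖w‖ + ‖μ‖ * d := by rw [norm_smul]
      _ ≤ ‖w‖ + R₁ * d := by
          have := mul_le_mul_of_nonneg_right hμ.le hd0.le
          linarith
      _ = ‖w‖ + ‖w‖ := by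
          rw [hR₁def, div_mul_cancel₀ _ hd0.ne']
      _ = 2 * ‖w‖ := by ring
  have hψd : DifferentiableOn ℂ ψ (ball 0 R₁) := by
    apply hd.comp
    · exact (differentiable_const w |>.add (differentiable_id.smul_const (w' - w))).differentiableOn
    · intro μ hμ
      simp only [mem_ball, dist_zero_right]
      calc ‖w + μ • (w' - w)‖ ≤ 2 * ‖w‖ := hdom μ hμ
        _ < 1 := by linarith
  have hψb : ∀ μ : ℂ, μ ∈ ball (0:ℂ) R₁ → ‖ψ μ‖ ≤ C * (2 * ‖w‖) ^ k := by
    intro μ hμ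
    calc ‖ψ μ‖ ≤ C * ‖w + μ • (w' - w)‖ ^ k := hb _ (by linarith [hdom μ hμ])
      _ ≤ C * (2 * ‖w‖) ^ k := by
          apply mul_le_mul_of_nonneg_left _ hC
          exact pow_le_pow_left₀ (norm_nonneg _) (hdom μ hμ) k
  set B : ℝ := 2 * (C * (2 * ‖w‖) ^ k) with hBdef
  have key : ∀ ε : ℝ, 0 < ε → ‖F w' - F w‖ ≤ (B + ε) / R₁ := by
    intro ε hε
    have hmaps : MapsTo ψ (ball 0 R₁) (ball (ψ 0) (B + ε)) := by
      intro μ hμ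
      rw [mem_ball]
      have h0 : (0:ℂ) ∈ ball (0:ℂ) R₁ := by
        simp only [mem_ball, dist_self]; linarith
      calc dist (ψ μ) (ψ 0) ≤ ‖ψ μ‖ + ‖ψ 0‖ := dist_le_norm_add_norm _ _
        _ ≤ B := by
            have h1 := hψb μ hμ
            have h2 := hψb 0 h0
            rw [hBdef]; linarith
        _ < B + ε := by linarith
    have h1mem : (1:ℂ) ∈ ball (0:ℂ) R₁ := by
      simp only [mem_ball, dist_zero_right]
      simpa using hR₁
    have := Complex.dist_le_div_mul_dist_of_mapsTo_ball hψd (hmaps.mono_right ball_subset_closedBall) h1mem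
    have hψ1 : ψ 1 = F w' := by
      rw [hψdef]; simp
    have hψ0 : ψ 0 = F w := by
      rw [hψdef]; simp
    rw [hψ1, hψ0] at this
    calc ‖F w' - F w‖ = dist (F w') (F w) := (dist_eq_norm _ _).symm
      _ ≤ (B + ε) / R₁ * dist (1:ℂ) 0 := this
      _ = (B + ε) / R₁ := by simp
  have hfin : ‖F w' - F w‖ ≤ B / R₁ := by
    refine le_of_forall_pos_le_add fun ε hε => ?_
    have := key (ε * R₁) (by positivity)
    calc ‖F w' - F w‖ ≤ (B + ε * R₁) / R₁ := this
      _ = B / R₁ + ε := by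
          field_simp
  calc ‖F w' - F w‖ ≤ B / R₁ := hfin
    _ = 2 * C * (2 * ‖w‖) ^ k * (d / ‖w‖) := by
        rw [hBdef, hR₁def]
        rw [div_div_eq_mul_div]
        ring
    _ = 2 * C * (2 * ‖w‖) ^ k * (‖w' - w‖ / ‖w‖) := rfl

lemma cc_apply_eq {E : Type*} [NormedAddCommGroup E] [NormedSpace ℂ E]
    (F : E → E) (z : E) (j : ℕ) :
    cc F z j = (2 * Real.pi * I : ℂ)⁻¹ •
      ∮ ζ in C(0, 1), (ζ - 0)⁻¹ ^ j • (ζ - 0)⁻¹ • F (ζ • z) := by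
  simp [cc, cauchyPowerSeries, ContinuousMultilinearMap.mkPiRing_apply]

lemma cc_smul {E : Type*} [NormedAddCommGroup E] [NormedSpace ℂ E]
    (c : ℂ) (F : E → E) (z : E) (j : ℕ) :
    cc (fun w => c • F w) z j = c • cc F z j := by
  rw [cc_apply_eq, cc_apply_eq]
  rw [smul_comm]
  congr 1
  have : ∀ ζ : ℂ, (ζ - 0)⁻¹ ^ j • (ζ - 0)⁻¹ • c • F (ζ • z)
      = c • ((ζ - 0)⁻¹ ^ j • (ζ - 0)⁻¹ • F (ζ • z)) := by
    intro ζ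
    rw [smul_comm ((ζ - 0)⁻¹) c, smul_comm ((ζ - 0)⁻¹ ^ j) c]
  simp only [this]
  exact circleIntegral.integral_smul c _ 0 1

lemma littleO_of_pointwise_bound {E : Type*} [NormedAddCommGroup E] [NormedSpace ℂ E]
    {G : E → E} {D δ : ℝ} (hδ : 0 < δ) (hD : 0 ≤ D) {K : ℕ}
    (hb : ∀ w : E, ‖w‖ ≤ δ → ‖G w‖ ≤ D * ‖w‖ ^ (K + 1)) {z : E} (hz : ‖z‖ = 1 / 2) :
    (fun l : ℂ => G (l • z)) =o[𝓝 (0 : ℂ)] fun l : ℂ => l ^ K := by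
  have h1 : (fun l : ℂ => G (l • z)) =O[𝓝 (0 : ℂ)] fun l : ℂ => l ^ (K + 1) := by
    rw [isBigO_iff]
    refine ⟨D, ?_⟩
    filter_upwards [Metric.ball_mem_nhds (0 : ℂ) (show (0:ℝ) < min (2 * δ) 1 by positivity)]
      with l hl
    simp only [mem_ball, dist_zero_right] at hl
    have hl2 : ‖l‖ < 2 * δ := lt_of_lt_of_le hl (min_le_left _ _)
    have hlz : ‖l • z‖ ≤ δ := by
      rw [norm_smul, hz]; linarith
    calc ‖G (l • z)‖ ≤ D * ‖l • z‖ ^ (K + 1) := hb _ hlz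
      _ ≤ D * ‖l‖ ^ (K + 1) := by
          apply mul_le_mul_of_nonneg_left _ hD
          apply pow_le_pow_left₀ (norm_nonneg _)
          rw [norm_smul, hz]
          nlinarith [norm_nonneg l]
      _ = D * ‖l ^ (K + 1)‖ := by rw [norm_pow]
  have h3 : (fun l : ℂ => l) =o[𝓝 (0 : ℂ)] fun _ => (1 : ℂ) :=
    (isLittleO_one_iff ℂ).mpr tendsto_id
  have h2 := (isBigO_refl (fun l : ℂ => l ^ K) (𝓝 0)).mul_isLittleO h3
  simp only [mul_one] at h2
  refine h1.trans_isLittleO ?_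
  have hpow : (fun l : ℂ => l ^ (K + 1)) = fun l : ℂ => l ^ K * l := by
    funext l; rw [pow_succ]
  rw [hpow]
  exact h2

/-- Cartan's uniqueness theorem, on the half ball. -/
theorem cartan_unique {f : E → E} (hmaps : MapsTo f (ball 0 1) (ball 0 1))
    (hd : DifferentiableOn ℂ f (ball 0 1)) (h0 : f 0 = 0)
    (hder : ∀ v : E, fderiv ℂ f 0 v = v) :
    ∀ w ∈ ball (0 : E) (1 / 2 : ℝ), f w = w := by
  set R : E → E := fun w => f w - w with hRdef
  have hRd : DifferentiableOn ℂ R (ball 0 1) := hd.sub differentiableOn_id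
  have hR0 : R 0 = 0 := by simp [hRdef, h0]
  have hRbound : ∀ w : E, ‖w‖ ≤ 1 / 2 → ‖R w‖ ≤ 2 := by
    intro w hw
    have hwb : w ∈ ball (0 : E) 1 := by
      simp only [mem_ball, dist_zero_right]; linarith
    have := hmaps hwb
    simp only [mem_ball, dist_zero_right] at this
    calc ‖R w‖ ≤ ‖f w‖ + ‖w‖ := norm_sub_le _ _
      _ ≤ 2 := by linarith
  have hball0 : ball (0 : E) 1 ∈ 𝓝 (0 : E) := isOpen_ball.mem_nhds (by simp)
  have hfd : DifferentiableAt ℂ f 0 := hd.differentiableAt hball0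
  have hfder : HasFDerivAt f (ContinuousLinearMap.id ℂ E) 0 := by
    have h := hfd.hasFDerivAt
    have heq : fderiv ℂ f 0 = ContinuousLinearMap.id ℂ E := by
      ext v; simpa using hder v
    rwa [heq] at h
  have hRder : HasFDerivAt R (0 : E →L[ℂ] E) 0 := by
    have := hfder.sub (hasFDerivAt_id (0 : E))
    rw [sub_self] at this
    exact this
  have hRo : R =o[𝓝 (0 : E)] fun w : E => w := by
    have h := hasFDerivAt_iff_isLittleO_nhds_zero.mp hRder
    simpa [hR0] using h
  have hslice1 : ∀ z : E, ‖z‖ = 1 / 2 →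
      (fun l : ℂ => R (l • z)) =o[𝓝 (0 : ℂ)] fun l : ℂ => l ^ 1 := by
    intro z hz
    have htend : Tendsto (fun l : ℂ => l • z) (𝓝 0) (𝓝 (0 : E)) := by
      have hcont : Continuous fun l : ℂ => l • z := continuous_id.smul continuous_const
      simpa using hcont.tendsto 0
    have h1 : (fun l : ℂ => R (l • z)) =o[𝓝 (0 : ℂ)] fun l : ℂ => l • z :=
      hRo.comp_tendsto htend
    have h2 : (fun l : ℂ => l • z) =O[𝓝 (0 : ℂ)] fun l : ℂ => l := by
      rw [isBigO_iff]
      exact ⟨‖z‖, Eventually.of_forall fun l => by rw [norm_smul, mul_comm]⟩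
    simpa [pow_one] using h1.trans_isBigO h2
  have hIm : ∀ m : ℕ, MapsTo (f^[m]) (ball (0 : E) 1) (ball (0 : E) 1) := by
    intro m
    induction m with
    | zero => simp [MapsTo]
    | succ m ih =>
        rw [Function.iterate_succ']
        exact hmaps.comp ih
  have hId : ∀ m : ℕ, DifferentiableOn ℂ (f^[m]) (ball (0 : E) 1) := by
    intro m
    induction m with
    | zero => simpa using differentiableOn_id
    | succ m ih =>
        rw [Function.iterate_succ']
        exact hd.comp ih (hIm m)
  have hI0 : ∀ m : ℕ, f^[m] 0 = 0 := by
    intro m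
    induction m with
    | zero => simp
    | succ m ih => rw [Function.iterate_succ']; simp [ih, h0]
  have hiter : ∀ (m : ℕ) (w : E), f^[m + 1] w = f^[m] w + R (f^[m] w) := by
    intro m w
    rw [Function.iterate_succ']
    simp [hRdef]
  have hImd : ∀ m : ℕ, DifferentiableOn ℂ (fun w => f^[m] w - w) (ball (0 : E) 1) :=
    fun m => (hId m).sub differentiableOn_id
  have hImb : ∀ m : ℕ, ∀ w : E, ‖w‖ ≤ 1 / 2 → ‖f^[m] w - w‖ ≤ 2 := by
    intro m w hw
    have hwb : w ∈ ball (0 : E) 1 := by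
      simp only [mem_ball, dist_zero_right]; linarith
    have := hIm m hwb
    simp only [mem_ball, dist_zero_right] at this
    calc ‖f^[m] w - w‖ ≤ ‖f^[m] w‖ + ‖w‖ := norm_sub_le _ _
      _ ≤ 2 := by linarith
  have main : ∀ k : ℕ, 1 ≤ k → ∀ z : E, ‖z‖ = 1 / 2 → ∀ j ≤ k, cc R z j = 0 := by
    intro k
    induction k with
    | zero => omega
    | succ k ih =>
        intro _ z hz j hj
        rcases Nat.eq_or_lt_of_le hj with rfl | hjlt
        · -- the new coefficient j = k + 1
          rcases Nat.eq_zero_or_pos k with rfl | hk1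
          · exact cc_zero_of_littleO hRd hz (hslice1 z hz) 1 le_rfl
          have hvan : ∀ z : E, ‖z‖ = 1 / 2 → ∀ j ≤ k, cc R z j = 0 :=
            fun z hz => ih hk1 z hz
          set K : ℕ := k + 1 with hKdef
          have hK2 : 2 ≤ K := by omega
          set C₀ : ℝ := 2 * 2 * 2 ^ K with hC₀def
          have hC₀ : 0 ≤ C₀ := by positivity
          have hbound : ∀ w : E, ‖w‖ ≤ 1 / 4 → ‖R w‖ ≤ C₀ * ‖w‖ ^ K := by
            intro w hw
            exact pointwise_bound hRd hRbound (k := k) hvan hR0 w hw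
          have herr : ∀ m : ℕ, ∃ Dm : ℝ, 0 ≤ Dm ∧ ∃ δ : ℝ, 0 < δ ∧ δ ≤ 1 / 8 ∧
              ∀ w : E, ‖w‖ ≤ δ → ‖f^[m] w - w - (m : ℂ) • R w‖ ≤ Dm * ‖w‖ ^ (K + 1) := by
            intro m
            induction m with
            | zero =>
                refine ⟨0, le_rfl, 1 / 8, by norm_num, le_rfl, fun w hw => ?_⟩
                simp
            | succ m ihm =>
                obtain ⟨D, hD, δ, hδ0, hδ8, hP⟩ := ihm
                set A : ℝ := (m : ℝ) * C₀ + D with hAdef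
                have hA : 0 ≤ A := by positivity
                refine ⟨D + 2 * C₀ * 2 ^ K * A, by positivity,
                  min δ (1 / (2 * (A + 1))), by positivity,
                  le_trans (min_le_left _ _) hδ8, fun w hw => ?_⟩
                have hwδ : ‖w‖ ≤ δ := le_trans hw (min_le_left _ _)
                have hwA : ‖w‖ ≤ 1 / (2 * (A + 1)) := le_trans hw (min_le_right _ _)
                have hw8 : ‖w‖ ≤ 1 / 8 := le_trans hwδ hδ8
                have hw4 : ‖w‖ ≤ 1 / 4 := by linarith
                have hw1 : ‖w‖ ≤ 1 := by linarith
                rcases eq_or_ne w 0 with rfl | hw0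
                · simp [hI0, hR0]
                have hnw : 0 < ‖w‖ := norm_pos_iff.mpr hw0
                have hPm := hP w hwδ
                have hRw : ‖R w‖ ≤ C₀ * ‖w‖ ^ K := hbound w hw4
                have hpowle : ‖w‖ ^ (K + 1) ≤ ‖w‖ ^ K :=
                  pow_le_pow_of_le_one hnw.le hw1 (by omega)
                have hRm : ‖f^[m] w - w‖ ≤ A * ‖w‖ ^ K := by
                  have h1 : ‖f^[m] w - w‖ ≤ ‖f^[m] w - w - (m : ℂ) • R w‖
                      + ‖(m : ℂ) • R w‖ := by
                    have h1' := norm_add_le (f^[m] w - w - (m : ℂ) • R w) ((m : ℂ) • R w)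
                    simpa using h1'
                  have h2 : ‖(m : ℂ) • R w‖ = (m : ℝ) * ‖R w‖ := by
                    rw [norm_smul]; simp
                  have h3 : (m : ℝ) * ‖R w‖ ≤ (m : ℝ) * (C₀ * ‖w‖ ^ K) :=
                    mul_le_mul_of_nonneg_left hRw (Nat.cast_nonneg m)
                  have h4 : D * ‖w‖ ^ (K + 1) ≤ D * ‖w‖ ^ K :=
                    mul_le_mul_of_nonneg_left hpowle hD
                  calc ‖f^[m] w - w‖ ≤ D * ‖w‖ ^ (K + 1) + (m : ℝ) * ‖R w‖ := by
                        rw [← h2] at *; linarith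
                    _ ≤ D * ‖w‖ ^ K + (m : ℝ) * (C₀ * ‖w‖ ^ K) := by linarith
                    _ = A * ‖w‖ ^ K := by rw [hAdef]; ring
                have hpow2 : ‖w‖ ^ K ≤ ‖w‖ * ‖w‖ := by
                  calc ‖w‖ ^ K ≤ ‖w‖ ^ 2 := pow_le_pow_of_le_one hnw.le hw1 hK2
                    _ = ‖w‖ * ‖w‖ := sq ‖w‖
                have hlt : ‖f^[m] w - w‖ < ‖w‖ := by
                  have h4 : A * ‖w‖ ≤ (A + 1) * (1 / (2 * (A + 1))) := by
                    calc A * ‖w‖ ≤ (A + 1) * ‖w‖ :=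
                          mul_le_mul_of_nonneg_right (by linarith) hnw.le
                      _ ≤ (A + 1) * (1 / (2 * (A + 1))) :=
                          mul_le_mul_of_nonneg_left hwA (by linarith)
                  have h5 : (A + 1) * (1 / (2 * (A + 1))) = 1 / 2 := by
                    rw [mul_one_div]
                    rw [div_eq_div_iff (by positivity) (by norm_num)]
                    ring
                  calc ‖f^[m] w - w‖ ≤ A * ‖w‖ ^ K := hRm
                    _ ≤ A * (‖w‖ * ‖w‖) := mul_le_mul_of_nonneg_left hpow2 hA
                    _ = (A * ‖w‖) * ‖w‖ := by ring
                    _ ≤ (1 / 2) * ‖w‖ := by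
                        rw [← h5]
                        exact mul_le_mul_of_nonneg_right h4 hnw.le
                    _ < ‖w‖ := by linarith
                have hdiff := diff_bound hRd hC₀ hbound hw8 hlt
                have hq : ‖f^[m] w - w‖ / ‖w‖ ≤ A * ‖w‖ ^ (K - 1) := by
                  rw [div_le_iff₀ hnw]
                  have hK1 : K - 1 + 1 = K := by omega
                  have hKK : A * ‖w‖ ^ (K - 1) * ‖w‖ = A * ‖w‖ ^ K := by
                    rw [mul_assoc, ← pow_succ, hK1]
                  rw [hKK]
                  exact hRm
                have herrb : ‖R (f^[m] w) - R w‖ ≤ 2 * C₀ * 2 ^ K * A * ‖w‖ ^ (K + 1) := by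
                  calc ‖R (f^[m] w) - R w‖
                      ≤ 2 * C₀ * (2 * ‖w‖) ^ K * (‖f^[m] w - w‖ / ‖w‖) := hdiff
                    _ ≤ 2 * C₀ * (2 * ‖w‖) ^ K * (A * ‖w‖ ^ (K - 1)) :=
                        mul_le_mul_of_nonneg_left hq (by positivity)
                    _ = 2 * C₀ * 2 ^ K * A * ‖w‖ ^ (K + (K - 1)) := by
                        rw [mul_pow, pow_add]; ring
                    _ ≤ 2 * C₀ * 2 ^ K * A * ‖w‖ ^ (K + 1) := by
                        apply mul_le_mul_of_nonneg_left _ (by positivity)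
                        exact pow_le_pow_of_le_one hnw.le hw1 (by omega)
                have hdecomp : f^[m + 1] w - w - ((m + 1 : ℕ) : ℂ) • R w
                    = (f^[m] w - w - (m : ℂ) • R w) + (R (f^[m] w) - R w) := by
                  rw [hiter m w]
                  push_cast
                  rw [add_smul, one_smul]
                  abel
                calc ‖f^[m + 1] w - w - ((m + 1 : ℕ) : ℂ) • R w‖
                    = ‖(f^[m] w - w - (m : ℂ) • R w) + (R (f^[m] w) - R w)‖ := by
                      rw [hdecomp]
                  _ ≤ ‖f^[m] w - w - (m : ℂ) • R w‖ + ‖R (f^[m] w) - R w‖ :=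
                      norm_add_le _ _
                  _ ≤ D * ‖w‖ ^ (K + 1) + 2 * C₀ * 2 ^ K * A * ‖w‖ ^ (K + 1) := by
                      linarith
                  _ = (D + 2 * C₀ * 2 ^ K * A) * ‖w‖ ^ (K + 1) := by ring
          -- coefficient of the iterates
          have hccm : ∀ m : ℕ, cc (fun w => f^[m] w - w) z K = (m : ℂ) • cc R z K := by
            intro m
            obtain ⟨D, hD, δ, hδ0, hδ8, hP⟩ := herr m
            have hGd : DifferentiableOn ℂ (fun w : E => f^[m] w - w - (m : ℂ) • R w)
                (ball (0 : E) 1) :=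
              (hImd m).sub (hRd.const_smul (m : ℂ))
            have hccG : cc (fun w : E => f^[m] w - w - (m : ℂ) • R w) z K = 0 := by
              apply cc_zero_of_littleO hGd hz
                (littleO_of_pointwise_bound hδ0 hD hP hz) K le_rfl
            have hsplit := cc_add (hImd m) hGd
              (hRd.const_smul (m : ℂ)) hz
              (fun w _ => by simp only [Pi.smul_apply]; abel) K
            rw [hsplit, hccG, zero_add]
            exact cc_smul (m : ℂ) R z K
          -- archimedean conclusion
          have hb2 : ∀ m : ℕ, (m : ℝ) * ‖cc R z K‖ ≤ 2 := by
            intro m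
            have h1 := cc_norm_le (hImd m) hz (hImb m) K
            rw [hccm m] at h1
            rw [norm_smul] at h1
            simpa using h1
          by_contra hne
          have hpos : 0 < ‖cc R z K‖ :=
            lt_of_le_of_ne (norm_nonneg _) (Ne.symm (fun h => hne (norm_eq_zero.mp h)))
          obtain ⟨m, hm⟩ := exists_nat_gt (2 / ‖cc R z K‖)
          have := hb2 m
          rw [div_lt_iff₀ hpos] at hm
          linarith
        · rcases Nat.lt_or_ge j 2 with hj2 | hj2
          · exact cc_zero_of_littleO hRd hz (hslice1 z hz) j (by omega)
          · exact ih (by omega) z hz j (by omega)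
  have hallvan : ∀ z : E, ‖z‖ = 1 / 2 → ∀ j : ℕ, cc R z j = 0 :=
    fun z hz j => main (j + 1) (by omega) z hz j (by omega)
  intro w hw
  simp only [mem_ball, dist_zero_right] at hw
  rcases eq_or_ne w 0 with rfl | hw0
  · exact h0
  have hnw : 0 < ‖w‖ := norm_pos_iff.mpr hw0
  set l : ℂ := ((2 * ‖w‖ : ℝ) : ℂ) with hldef
  have hl0 : l ≠ 0 := by
    simp only [hldef, ne_eq, Complex.ofReal_eq_zero]
    positivity
  set z : E := l⁻¹ • w with hzdef
  have hnl : ‖l‖ = 2 * ‖w‖ := by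
    rw [hldef, Complex.norm_real, Real.norm_eq_abs, abs_of_pos (by positivity)]
  have hz : ‖z‖ = 1 / 2 := by
    rw [hzdef, norm_smul, norm_inv, hnl, inv_mul_eq_div, div_eq_iff (by positivity)]
    ring
  have hlz : l • z = w := by
    rw [hzdef, smul_smul, mul_inv_cancel₀ hl0, one_smul]
  have hl1 : ‖l‖ < 1 := by rw [hnl]; linarith
  have hs := slice_hasSum hRd hz hl1
  have hzero : HasSum (fun j : ℕ => l ^ j • cc R z j) 0 := by
    have hfn : (fun j : ℕ => l ^ j • cc R z j) = fun _ => (0 : E) := by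
      funext j; rw [hallvan z hz j, smul_zero]
    rw [hfn]
    exact hasSum_zero
  have hRw : R (l • z) = 0 := hs.unique hzero
  rw [hlz] at hRw
  have hfw : f w - w = 0 := hRw
  exact sub_eq_zero.mp hfw

/-- a continuous linear map sending the unit ball into itself has norm at most one -/
lemma norm_le_of_mapsTo_ball {E : Type*} [NormedAddCommGroup E] [NormedSpace ℂ E]
    (T : E →L[ℂ] E) (hT : ∀ y ∈ ball (0 : E) 1, T y ∈ ball (0 : E) 1) (x : E) :
    ‖T x‖ ≤ ‖x‖ := by
  by_contra hgt
  push_neg at hgt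
  have hx0 : x ≠ 0 := by
    rintro rfl
    simp at hgt
  have hnx : 0 < ‖x‖ := norm_pos_iff.mpr hx0
  have hnTx : 0 < ‖T x‖ := lt_trans hnx hgt
  have hdiv : ‖x‖ / ‖T x‖ < 1 := (div_lt_one hnTx).mpr hgt
  obtain ⟨r, hr1, hr2⟩ := exists_between hdiv
  have hr0 : 0 < r := lt_of_le_of_lt (by positivity) hr1
  set y : E := ((r / ‖x‖ : ℝ) : ℂ) • x with hydef
  have hny : ‖y‖ = r := by
    rw [hydef, norm_smul, Complex.norm_real, Real.norm_eq_abs,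
      abs_of_pos (by positivity)]
    field_simp
  have hyball : y ∈ ball (0 : E) 1 := by
    simp only [mem_ball, dist_zero_right]
    rw [hny]; exact hr2
  have := hT y hyball
  simp only [mem_ball, dist_zero_right] at this
  rw [hydef, map_smul, norm_smul, Complex.norm_real, Real.norm_eq_abs,
    abs_of_pos (by positivity)] at this
  -- this : r / ‖x‖ * ‖T x‖ < 1
  have : r * ‖T x‖ < ‖x‖ := by
    rw [div_mul_eq_mul_div, div_lt_one hnx] at this
    linarith
  have : r < ‖x‖ / ‖T x‖ := (lt_div_iff₀ hnTx).mpr this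
  linarith

/-- Cartan: a biholomorphic self-map `h` of the open unit ball of `ℂⁿ`
fixing the origin is the restriction of a unitary linear map of `ℂⁿ`. -/
theorem stmt19 {n : ℕ} (hn : 1 ≤ n)
    (h : EuclideanSpace ℂ (Fin n) → EuclideanSpace ℂ (Fin n))
    (hmaps : Set.MapsTo h (Metric.ball 0 1) (Metric.ball 0 1))
    (hhol : DifferentiableOn ℂ h (Metric.ball 0 1))
    (hbij : ∃ g : EuclideanSpace ℂ (Fin n) → EuclideanSpace ℂ (Fin n),
      Set.MapsTo g (Metric.ball 0 1) (Metric.ball 0 1) ∧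
      DifferentiableOn ℂ g (Metric.ball 0 1) ∧
      (∀ z ∈ Metric.ball (0 : EuclideanSpace ℂ (Fin n)) 1, g (h z) = z) ∧
      (∀ z ∈ Metric.ball (0 : EuclideanSpace ℂ (Fin n)) 1, h (g z) = z))
    (h0 : h 0 = 0) :
    ∃ U : EuclideanSpace ℂ (Fin n) ≃ₗᵢ[ℂ] EuclideanSpace ℂ (Fin n),
      ∀ z ∈ Metric.ball (0 : EuclideanSpace ℂ (Fin n)) 1, h z = U z := by
  obtain ⟨g, hgmaps, hghol, hgh, hhg⟩ := hbij
  have h0mem : (0 : EuclideanSpace ℂ (Fin n)) ∈ ball (0 : EuclideanSpace ℂ (Fin n)) 1 := by simp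
  have hg0 : g 0 = 0 := by
    have := hgh 0 h0mem
    rwa [h0] at this
  have hball0 : ball (0 : EuclideanSpace ℂ (Fin n)) 1 ∈ 𝓝 (0 : EuclideanSpace ℂ (Fin n)) := isOpen_ball.mem_nhds h0mem
  have hhd : DifferentiableAt ℂ h 0 := hhol.differentiableAt hball0
  have hgd : DifferentiableAt ℂ g 0 := hghol.differentiableAt hball0
  set A : EuclideanSpace ℂ (Fin n) →L[ℂ] EuclideanSpace ℂ (Fin n) := fderiv ℂ h 0 with hAdef
  set B : EuclideanSpace ℂ (Fin n) →L[ℂ] EuclideanSpace ℂ (Fin n) := fderiv ℂ g 0 with hBdef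
  -- chain rule identities
  have hBA : ∀ v : EuclideanSpace ℂ (Fin n), B (A v) = v := by
    have hev : (g ∘ h) =ᶠ[𝓝 (0 : EuclideanSpace ℂ (Fin n))] id := by
      filter_upwards [hball0] with x hx
      exact hgh x hx
    have hcomp : fderiv ℂ (g ∘ h) 0 = B.comp A := by
      have hgd' : DifferentiableAt ℂ g (h 0) := by rwa [h0]
      rw [fderiv_comp 0 hgd' hhd, h0]
    have hid : fderiv ℂ (g ∘ h) 0 = ContinuousLinearMap.id ℂ (EuclideanSpace ℂ (Fin n)) := by
      rw [hev.fderiv_eq, fderiv_id]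
    intro v
    have := congrArg (fun T : EuclideanSpace ℂ (Fin n) →L[ℂ] EuclideanSpace ℂ (Fin n) => T v) (hcomp.symm.trans hid)
    simpa using this
  have hAB : ∀ v : EuclideanSpace ℂ (Fin n), A (B v) = v := by
    have hev : (h ∘ g) =ᶠ[𝓝 (0 : EuclideanSpace ℂ (Fin n))] id := by
      filter_upwards [hball0] with x hx
      exact hhg x hx
    have hcomp : fderiv ℂ (h ∘ g) 0 = A.comp B := by
      have hhd' : DifferentiableAt ℂ h (g 0) := by rwa [hg0]
      rw [fderiv_comp 0 hhd' hgd, hg0]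
    have hid : fderiv ℂ (h ∘ g) 0 = ContinuousLinearMap.id ℂ (EuclideanSpace ℂ (Fin n)) := by
      rw [hev.fderiv_eq, fderiv_id]
    intro v
    have := congrArg (fun T : EuclideanSpace ℂ (Fin n) →L[ℂ] EuclideanSpace ℂ (Fin n) => T v) (hcomp.symm.trans hid)
    simpa using this
  -- rotation trick
  have key : ∀ θ : ℂ, ‖θ‖ = 1 → ∀ w ∈ ball (0 : EuclideanSpace ℂ (Fin n)) (1 / 2 : ℝ),
      g (θ⁻¹ • h (θ • w)) = w := by
    intro θ hθ
    have hθ0 : θ ≠ 0 := by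
      intro hc; rw [hc] at hθ; simp at hθ
    have hθinv : ‖θ⁻¹‖ = 1 := by rw [norm_inv, hθ]; norm_num
    have hsmul_mem : ∀ (c : ℂ), ‖c‖ = 1 → ∀ y : EuclideanSpace ℂ (Fin n), y ∈ ball (0:EuclideanSpace ℂ (Fin n)) 1 → c • y ∈ ball (0:EuclideanSpace ℂ (Fin n)) 1 := by
      intro c hc y hy
      simp only [mem_ball, dist_zero_right] at hy ⊢
      rw [norm_smul, hc, one_mul]; exact hy
    have hmapsθ : MapsTo (fun w : EuclideanSpace ℂ (Fin n) => g (θ⁻¹ • h (θ • w))) (ball 0 1) (ball 0 1) := by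
      intro w hw
      exact hgmaps (hsmul_mem θ⁻¹ hθinv _ (hmaps (hsmul_mem θ hθ w hw)))
    have hd1 : DifferentiableOn ℂ (fun w : EuclideanSpace ℂ (Fin n) => h (θ • w)) (ball 0 1) := by
      apply hhol.comp
      · exact (differentiable_id.const_smul θ).differentiableOn
      · exact fun w hw => hsmul_mem θ hθ w hw
    have hd2 : DifferentiableOn ℂ (fun w : EuclideanSpace ℂ (Fin n) => θ⁻¹ • h (θ • w)) (ball 0 1) :=
      hd1.const_smul θ⁻¹
    have hdθ : DifferentiableOn ℂ (fun w : EuclideanSpace ℂ (Fin n) => g (θ⁻¹ • h (θ • w))) (ball 0 1) := by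
      apply hghol.comp hd2
      intro w hw
      exact hsmul_mem θ⁻¹ hθinv _ (hmaps (hsmul_mem θ hθ w hw))
    have h0θ : (fun w : EuclideanSpace ℂ (Fin n) => g (θ⁻¹ • h (θ • w))) 0 = 0 := by
      simp [h0, hg0]
    -- derivative computation
    have hDer : HasFDerivAt (fun w : EuclideanSpace ℂ (Fin n) => g (θ⁻¹ • h (θ • w)))
        (B.comp (θ⁻¹ • (A.comp (θ • ContinuousLinearMap.id ℂ (EuclideanSpace ℂ (Fin n)))))) 0 := by
      have h1 : HasFDerivAt (fun w : EuclideanSpace ℂ (Fin n) => θ • w) (θ • ContinuousLinearMap.id ℂ (EuclideanSpace ℂ (Fin n))) 0 :=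
        (θ • ContinuousLinearMap.id ℂ (EuclideanSpace ℂ (Fin n))).hasFDerivAt
      have h2 : HasFDerivAt h A ((fun w : EuclideanSpace ℂ (Fin n) => θ • w) 0) := by
        simpa using hhd.hasFDerivAt
      have h3 := (h2.comp 0 h1).const_smul θ⁻¹
      have h4 : HasFDerivAt g B ((fun w : EuclideanSpace ℂ (Fin n) => θ⁻¹ • h (θ • w)) 0) := by
        simpa [h0] using hgd.hasFDerivAt
      have h5 := h4.comp 0 h3
      exact h5
    have hder : ∀ v : EuclideanSpace ℂ (Fin n), fderiv ℂ (fun w : EuclideanSpace ℂ (Fin n) => g (θ⁻¹ • h (θ • w))) 0 v = v := by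
      intro v
      rw [hDer.fderiv]
      simp only [ContinuousLinearMap.comp_apply, ContinuousLinearMap.smul_apply,
        ContinuousLinearMap.id_apply, map_smul]
      rw [smul_smul, inv_mul_cancel₀ hθ0, one_smul]
      exact hBA v
    exact cartan_unique hmapsθ hdθ h0θ hder
  have homog : ∀ θ : ℂ, ‖θ‖ = 1 → ∀ w ∈ ball (0 : EuclideanSpace ℂ (Fin n)) (1 / 2 : ℝ),
      h (θ • w) = θ • h w := by
    intro θ hθ w hw
    have hθ0 : θ ≠ 0 := by
      intro hc; rw [hc] at hθ; simp at hθ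
    have hθw : θ • w ∈ ball (0:EuclideanSpace ℂ (Fin n)) 1 := by
      simp only [mem_ball, dist_zero_right] at hw ⊢
      rw [norm_smul, hθ, one_mul]; linarith
    have hx : θ⁻¹ • h (θ • w) ∈ ball (0:EuclideanSpace ℂ (Fin n)) 1 := by
      have := hmaps hθw
      simp only [mem_ball, dist_zero_right] at this ⊢
      rw [norm_smul, norm_inv, hθ]
      simpa using this
    have hk := key θ hθ w hw
    have := congrArg h hk
    rw [hhg _ hx] at this
    -- this : θ⁻¹ • h (θ • w) = h w
    rw [← this, smul_smul, mul_inv_cancel₀ hθ0, one_smul]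
  -- unimodular points accumulate at 1
  have hfreq : ∃ᶠ l : ℂ in 𝓝[≠] (1 : ℂ), ‖l‖ = 1 := by
    have hseq : Tendsto (fun j : ℕ => Complex.exp ((1 / (j + 1) : ℝ) * I)) atTop
        (𝓝[≠] (1 : ℂ)) := by
      rw [tendsto_nhdsWithin_iff]
      constructor
      · have h1 : Tendsto (fun j : ℕ => (1 / (j + 1) : ℝ)) atTop (𝓝 0) :=
          tendsto_one_div_add_atTop_nhds_zero_nat
        have h2 : Tendsto (fun j : ℕ => ((1 / (j + 1) : ℝ) : ℂ) * I) atTop (𝓝 0) := by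
          have := (Complex.continuous_ofReal.tendsto 0).comp h1
          have h3 := this.mul_const I
          simpa using h3
        have := (Complex.continuous_exp.tendsto 0).comp h2
        simpa [Function.comp_def] using this
      · refine Eventually.of_forall fun j => ?_
        simp only [mem_compl_iff, mem_singleton_iff]
        intro hc
        rw [Complex.exp_eq_one_iff] at hc
        obtain ⟨m, hm⟩ := hc
        have hI : ((1 / (j + 1) : ℝ) : ℂ) = m * (2 * Real.pi) := by
          have hI2 : ((1 / (j + 1) : ℝ) : ℂ) * I = (m * (2 * Real.pi)) * I := by
            rw [hm]; push_cast; ring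
          exact mul_right_cancel₀ Complex.I_ne_zero hI2
        have hre : (1 / (j + 1) : ℝ) = (m : ℝ) * (2 * Real.pi) := by
          exact_mod_cast congrArg Complex.re hI
        have hpos : (0:ℝ) < 1 / (j + 1) := by positivity
        have hle : (1 / (j + 1) : ℝ) ≤ 1 := by
          rw [div_le_one (by positivity)]
          have : (0:ℝ) ≤ j := Nat.cast_nonneg j
          linarith
        rcases lt_trichotomy m 0 with hm0 | hm0 | hm0
        · have : (m : ℝ) ≤ -1 := by exact_mod_cast Int.le_sub_one_of_lt hm0
          nlinarith [Real.pi_gt_three]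
        · rw [hm0] at hre; simp at hre; linarith
        · have : (1:ℝ) ≤ (m : ℝ) := by exact_mod_cast hm0
          nlinarith [Real.pi_gt_three]
    refine hseq.frequently (Frequently.of_forall fun j => ?_)
    simpa using Complex.norm_exp_ofReal_mul_I (1 / (j + 1) : ℝ)
  -- full homogeneity by analytic continuation
  have homog2 : ∀ w : EuclideanSpace ℂ (Fin n), w ∈ ball (0 : EuclideanSpace ℂ (Fin n)) (1 / 2 : ℝ) → w ≠ 0 →
      ∀ l : ℂ, ‖l‖ < 1 / ‖w‖ → h (l • w) = l • h w := by
    intro w hw hw0 l hl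
    have hnw : 0 < ‖w‖ := norm_pos_iff.mpr hw0
    simp only [mem_ball, dist_zero_right] at hw
    set U : Set ℂ := ball (0 : ℂ) (1 / ‖w‖) with hUdef
    have hUo : IsOpen U := isOpen_ball
    have hUc : IsPreconnected U := (convex_ball _ _).isPreconnected
    have hmapsU : ∀ l' : ℂ, l' ∈ U → l' • w ∈ ball (0 : EuclideanSpace ℂ (Fin n)) 1 := by
      intro l' hl'
      simp only [hUdef, mem_ball, dist_zero_right] at hl' ⊢
      rw [norm_smul]
      calc ‖l'‖ * ‖w‖ < (1 / ‖w‖) * ‖w‖ := by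
            exact mul_lt_mul_of_pos_right hl' hnw
        _ = 1 := by field_simp
    have hF1 : AnalyticOnNhd ℂ (fun l' : ℂ => h (l' • w)) U := by
      apply DifferentiableOn.analyticOnNhd _ hUo
      apply hhol.comp
      · exact (differentiable_id.smul_const w).differentiableOn
      · exact fun l' hl' => hmapsU l' hl'
    have hF2 : AnalyticOnNhd ℂ (fun l' : ℂ => l' • h w) U :=
      ((differentiable_id.smul_const (h w)).differentiableOn).analyticOnNhd hUo
    have h1U : (1 : ℂ) ∈ U := by
      simp only [hUdef, mem_ball, dist_zero_right, norm_one]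
      rw [lt_div_iff₀ hnw]
      linarith
    have hfreq2 : ∃ᶠ l' : ℂ in 𝓝[≠] (1 : ℂ),
        (fun l' : ℂ => h (l' • w)) l' = (fun l' : ℂ => l' • h w) l' := by
      refine hfreq.mono fun l' hl' => ?_
      exact homog l' hl' w (by simp only [mem_ball, dist_zero_right]; linarith)
    have heq := hF1.eqOn_of_preconnected_of_frequently_eq hF2 hUc h1U hfreq2
    exact heq (by simp only [hUdef, mem_ball, dist_zero_right]; exact hl)
  -- h is linear on the ball
  have hlin : ∀ z ∈ ball (0 : EuclideanSpace ℂ (Fin n)) 1, h z = A z := by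
    intro z hz
    rcases eq_or_ne z 0 with rfl | hz0
    · rw [h0, map_zero]
    simp only [mem_ball, dist_zero_right] at hz
    have hnz : 0 < ‖z‖ := norm_pos_iff.mpr hz0
    set lz : ℂ := ((4 * ‖z‖ : ℝ) : ℂ) with hlzdef
    have hlz0 : lz ≠ 0 := by
      simp only [hlzdef, ne_eq, Complex.ofReal_eq_zero]
      positivity
    set w : EuclideanSpace ℂ (Fin n) := lz⁻¹ • z with hwdef
    have hw0 : w ≠ 0 := by
      simp only [hwdef, ne_eq, smul_eq_zero, inv_eq_zero]
      push_neg
      exact ⟨hlz0, hz0⟩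
    have hnlz : ‖lz‖ = 4 * ‖z‖ := by
      rw [hlzdef, Complex.norm_real, Real.norm_eq_abs, abs_of_pos (by positivity)]
    have hnw : ‖w‖ = 1 / 4 := by
      rw [hwdef, norm_smul, norm_inv, hnlz]
      rw [inv_mul_eq_div, div_eq_div_iff (by positivity) (by norm_num)]
      ring
    have hwball : w ∈ ball (0 : EuclideanSpace ℂ (Fin n)) (1 / 2 : ℝ) := by
      simp only [mem_ball, dist_zero_right, hnw]; norm_num
    have hlzw : lz • w = z := by
      rw [hwdef, smul_smul, mul_inv_cancel₀ hlz0, one_smul]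
    -- h w = A w via derivatives
    have hhw : h w = A w := by
      have hev : (fun l : ℂ => h (l • w)) =ᶠ[𝓝 (0 : ℂ)] fun l : ℂ => l • h w := by
        filter_upwards [Metric.ball_mem_nhds (0 : ℂ) one_pos] with l hl
        apply homog2 w hwball hw0
        simp only [mem_ball, dist_zero_right] at hl
        rw [hnw]
        calc ‖l‖ < 1 := hl
          _ < 1 / (1 / 4) := by norm_num
      have hD1 : HasDerivAt (fun l : ℂ => l • w) ((1:ℂ) • w) 0 :=
        (hasDerivAt_id (0 : ℂ)).smul_const w
      have hD1' : HasDerivAt (fun l : ℂ => l • w) w 0 := by simpa using hD1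
      have hAt : HasFDerivAt h A ((fun l : ℂ => l • w) 0) := by
        simpa using hhd.hasFDerivAt
      have hD2 : HasDerivAt (fun l : ℂ => h (l • w)) (A w) 0 :=
        hAt.comp_hasDerivAt 0 hD1'
      have hD3 : HasDerivAt (fun l : ℂ => l • h w) ((1:ℂ) • h w) 0 :=
        (hasDerivAt_id (0 : ℂ)).smul_const (h w)
      have hD3' : HasDerivAt (fun l : ℂ => l • h w) (h w) 0 := by simpa using hD3
      have hD4 : HasDerivAt (fun l : ℂ => h (l • w)) (h w) 0 :=
        hD3'.congr_of_eventuallyEq hev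
      exact (hD2.unique hD4).symm
    calc h z = h (lz • w) := by rw [hlzw]
      _ = lz • h w := by
          apply homog2 w hwball hw0
          rw [hnw, hnlz]
          calc 4 * ‖z‖ < 4 * 1 := by linarith
            _ = 1 / (1 / 4) := by norm_num
      _ = lz • A w := by rw [hhw]
      _ = A (lz • w) := (map_smul A lz w).symm
      _ = A z := by rw [hlzw]
  -- A and B map the ball into itself
  have hAball : ∀ y ∈ ball (0 : EuclideanSpace ℂ (Fin n)) 1, A y ∈ ball (0 : EuclideanSpace ℂ (Fin n)) 1 := by
    intro y hy
    rw [← hlin y hy]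
    exact hmaps hy
  have hBball : ∀ y ∈ ball (0 : EuclideanSpace ℂ (Fin n)) 1, B y ∈ ball (0 : EuclideanSpace ℂ (Fin n)) 1 := by
    intro y hy
    have h1 : A (g y) = y := by
      rw [← hlin (g y) (hgmaps hy)]
      exact hhg y hy
    have h2 : B y = g y := by
      calc B y = B (A (g y)) := by rw [h1]
        _ = g y := hBA (g y)
    rw [h2]
    exact hgmaps hy
  have hAnorm : ∀ x : EuclideanSpace ℂ (Fin n), ‖A x‖ = ‖x‖ := by
    intro x
    refine le_antisymm (norm_le_of_mapsTo_ball A hAball x) ?_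
    calc ‖x‖ = ‖B (A x)‖ := by rw [hBA x]
      _ ≤ ‖A x‖ := norm_le_of_mapsTo_ball B hBball (A x)
  -- build the unitary
  set Aeq : EuclideanSpace ℂ (Fin n) ≃L[ℂ] EuclideanSpace ℂ (Fin n) :=
    ContinuousLinearEquiv.equivOfInverse A B hBA hAB with hAeqdef
  refine ⟨⟨Aeq.toLinearEquiv, fun x => hAnorm x⟩, fun z hz => ?_⟩
  exact hlin z hz

end CartanAux
end
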